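/- arXiv:2001.03958 — 7 statements merged into one kernel-verified Lean document; each statement's English description precedes it below -/
import Mathlib

section
/- Let S be a nonempty convex subset of ℝ^k and g : S → ℝ a concave function. Define W(x) = sup{g(a) + a·x : a ∈ S} for x ∈ ℝ^k and G(a) = inf{W(x) - a·x : x ∈ ℝ^k} for a ∈ S. Then G(a) = g(a) for every a in the relative interior of S. -/
open scoped RealInnerProductSpace
open Set

set_option maxHeartbeats 1000000 in
/-- A concave function on a convex set with nonempty interior admits a supergradient
at every interior point. -/
lemma exists_supergradient_aux {k : ℕ} {C : Set (EuclideanSpace ℝ (Fin k))}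
    {f : EuclideanSpace ℝ (Fin k) → ℝ} (hC : Convex ℝ C) (hf : ConcaveOn ℝ C f)
    {a : EuclideanSpace ℝ (Fin k)} (ha : a ∈ interior C) :
    ∃ v, ∀ b ∈ C, f b ≤ f a + ⟪v, b - a⟫ := by
  classical
  set D : Set (EuclideanSpace ℝ (Fin k) × ℝ) :=
    {p | p.1 ∈ interior C ∧ p.2 < f p.1} with hD
  have hopen : IsOpen D := by
    have hcont : ContinuousOn (fun p : EuclideanSpace ℝ (Fin k) × ℝ => f p.1 - p.2)
        ((interior C) ×ˢ (univ : Set ℝ)) := by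
      apply ContinuousOn.sub
      · exact hf.continuousOn_interior.comp continuous_fst.continuousOn fun p hp => hp.1
      · exact continuous_snd.continuousOn
    have h := hcont.isOpen_inter_preimage (isOpen_interior.prod isOpen_univ) (isOpen_Ioi (a := (0:ℝ)))
    convert h using 1
    ext p
    constructor
    · rintro ⟨h1, h2⟩
      exact ⟨⟨h1, mem_univ _⟩, by simpa [sub_pos] using h2⟩
    · rintro ⟨⟨h1, -⟩, h2⟩
      exact ⟨h1, by simpa [sub_pos] using h2⟩
  have hfint : ConcaveOn ℝ (interior C) f := hf.subset interior_subset hC.interior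
  have hDconv : Convex ℝ D := by
    rintro ⟨x, s⟩ ⟨hx, hs⟩ ⟨y, t⟩ ⟨hy, ht⟩ α β hα hβ hαβ
    refine ⟨hC.interior hx hy hα hβ hαβ, ?_⟩
    have h2 : α * f x + β * f y ≤ f (α • x + β • y) := by
      simpa [smul_eq_mul] using hfint.2 hx hy hα hβ hαβ
    have h1 : α * s + β * t < α * f x + β * f y := by
      rcases eq_or_lt_of_le hα with rfl | hα'
      · have hβ1 : β = 1 := by linarith
        simp [hβ1, ht]
      · have := mul_lt_mul_of_pos_left hs hα'
        have := mul_le_mul_of_nonneg_left ht.le hβ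
        linarith
    calc (α • (x, s) + β • (y, t)).2 = α * s + β * t := by simp [smul_eq_mul]
      _ < α * f x + β * f y := h1
      _ ≤ f (α • x + β • y) := h2
      _ = f ((α • (x, s) + β • (y, t)).1) := by simp
  have hp0 : ((a, f a) : EuclideanSpace ℝ (Fin k) × ℝ) ∉ D := fun h => lt_irrefl _ h.2
  obtain ⟨φ, hφ⟩ := geometric_hahn_banach_open_point hDconv hopen hp0
  set c : ℝ := φ (0, 1) with hc_def
  set ψ : EuclideanSpace ℝ (Fin k) →L[ℝ] ℝ :=
    φ.comp (ContinuousLinearMap.inl ℝ (EuclideanSpace ℝ (Fin k)) ℝ) with hψ_def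
  have key : ∀ (x : EuclideanSpace ℝ (Fin k)) (t : ℝ), φ (x, t) = ψ x + t * c := by
    intro x t
    have hxt : (x, t) = (x, (0 : ℝ)) + t • ((0 : EuclideanSpace ℝ (Fin k)), (1 : ℝ)) := by
      simp [Prod.ext_iff]
    rw [hxt, map_add, map_smul]
    simp [hψ_def, hc_def, smul_eq_mul]
  have hc : 0 < c := by
    have h1 := hφ (a, f a - 1) ⟨ha, show f a - 1 < f a by linarith⟩
    rw [key, key] at h1
    linarith
  have hint : ∀ b ∈ interior C, ψ b + f b * c ≤ ψ a + f a * c := by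
    intro b hb
    refine le_of_forall_pos_lt_add fun ε hε => ?_
    have hε' : 0 < ε / c := div_pos hε hc
    have h1 := hφ (b, f b - ε / c) ⟨hb, show f b - ε / c < f b by linarith⟩
    rw [key, key] at h1
    have : (f b - ε / c) * c = f b * c - ε := by field_simp
    linarith
  set v0 := (InnerProductSpace.toDual ℝ (EuclideanSpace ℝ (Fin k))).symm ψ with hv0
  have hv0' : ∀ x, ⟪v0, x⟫ = ψ x := fun x => InnerProductSpace.toDual_symm_apply
  refine ⟨(-(1 / c)) • v0, fun b hb => ?_⟩
  have hinner : ⟪(-(1 / c)) • v0, b - a⟫ = -(1 / c) * (ψ b - ψ a) := by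
    rw [real_inner_smul_left, inner_sub_right, hv0', hv0']
  set m : EuclideanSpace ℝ (Fin k) := b + (1 / 2 : ℝ) • (a - b) with hm_def
  have hm : m ∈ interior C :=
    hC.add_smul_sub_mem_interior hb ha ⟨by norm_num, by norm_num⟩
  have hm_eq : m = (1 / 2 : ℝ) • a + (1 / 2 : ℝ) • b := by
    rw [hm_def]; module
  have hconc : (1 / 2 : ℝ) * f a + (1 / 2 : ℝ) * f b ≤ f m := by
    rw [hm_eq]
    simpa [smul_eq_mul] using
      hf.2 (interior_subset ha) hb (by norm_num : (0:ℝ) ≤ 1/2)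
        (by norm_num : (0:ℝ) ≤ 1/2) (by norm_num)
  have hψm : ψ m = (1 / 2 : ℝ) * ψ a + (1 / 2 : ℝ) * ψ b := by
    rw [hm_eq]; simp
  have h1 := hint m hm
  rw [hψm] at h1
  have h2 : f m * c ≥ ((1 / 2 : ℝ) * f a + (1 / 2 : ℝ) * f b) * c :=
    mul_le_mul_of_nonneg_right hconc hc.le
  -- combine: (1/2) ψ b + (1/2) f b * c ≤ (1/2) ψ a + (1/2) f a * c
  have h3 : f b * c ≤ f a * c + (ψ a - ψ b) := by nlinarith
  rw [hinner]
  have h4 : -(1 / c) * (ψ b - ψ a) * c = ψ a - ψ b := by field_simp; ring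
  nlinarith
/-- Double Legendre-type transform of a concave function on a convex set `S ⊆ ℝ^k`
recovers the function on the relative interior of `S` (Feng–Huang, Rockafellar). -/
theorem legendre_double_transform_concave
    {k : ℕ} (S : Set (EuclideanSpace ℝ (Fin k))) (hS : S.Nonempty)
    (hconv : Convex ℝ S)
    (g : EuclideanSpace ℝ (Fin k) → ℝ) (hg : ConcaveOn ℝ S g)
    (W : EuclideanSpace ℝ (Fin k) → EReal)
    (hW : ∀ x, W x = ⨆ a ∈ S, ((g a + ⟪a, x⟫ : ℝ) : EReal))
    (G : EuclideanSpace ℝ (Fin k) → EReal)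
    (hG : ∀ a, G a = ⨅ x, W x - ((⟪a, x⟫ : ℝ) : EReal)) :
    ∀ a ∈ intrinsicInterior ℝ S, G a = (g a : EReal) := by
  intro a ha
  have haS : a ∈ S := intrinsicInterior_subset ha
  have haSpan : a ∈ affineSpan ℝ S := subset_affineSpan ℝ S haS
  -- lower bound : g a ≤ G a
  have hge : (g a : EReal) ≤ G a := by
    rw [hG]
    refine le_iInf fun x => ?_
    have h1 : ((g a + ⟪a, x⟫ : ℝ) : EReal) ≤ W x := by
      rw [hW]; exact le_iSup₂_of_le a haS le_rfl
    calc (g a : EReal) = ((g a + ⟪a, x⟫ : ℝ) : EReal) - ((⟪a, x⟫ : ℝ) : EReal) := by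
          rw [← EReal.coe_sub]; norm_num
      _ ≤ W x - ((⟪a, x⟫ : ℝ) : EReal) := EReal.sub_le_sub h1 le_rfl
  -- set up the affine projection onto the affine span
  set V := (affineSpan ℝ S).direction with hV
  set Q : EuclideanSpace ℝ (Fin k) →ₗ[ℝ] EuclideanSpace ℝ (Fin k) :=
    V.subtype ∘ₗ (V.orthogonalProjectionOnto).toLinearMap with hQ
  have hQval : ∀ u, Q u = (V.orthogonalProjectionOnto u : EuclideanSpace ℝ (Fin k)) := fun u => rfl
  set L : EuclideanSpace ℝ (Fin k) →ᵃ[ℝ] EuclideanSpace ℝ (Fin k) :=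
    AffineMap.mk' (fun e => a + Q (e - a)) Q a
      (fun p => by simp [vsub_eq_sub, vadd_eq_add]; abel) with hL
  have hLval : ∀ e, L e = a + Q (e - a) := fun e => rfl
  have hLmem : ∀ b ∈ S, L b = b := by
    intro b hb
    have hdir : b - a ∈ V :=
      AffineSubspace.vsub_mem_direction (subset_affineSpan ℝ S hb) haSpan
    rw [hLval, hQval, ← Submodule.starProjection_apply, Submodule.starProjection_eq_self_iff.2 hdir]
    abel
  have hSsub : S ⊆ L ⁻¹' S := fun b hb => by
    simp only [mem_preimage, hLmem b hb]; exact hb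
  have hconv' : Convex ℝ (L ⁻¹' S) := hconv.affine_preimage L
  have hconc' : ConcaveOn ℝ (L ⁻¹' S) (g ∘ L) := hg.comp_affineMap L
  -- a is in the interior of the preimage
  have ha' : a ∈ interior (L ⁻¹' S) := by
    obtain ⟨y, hy, hya⟩ := mem_intrinsicInterior.1 ha
    obtain ⟨ε, hε, hball⟩ := Metric.mem_nhds_iff.1 (mem_interior_iff_mem_nhds.1 hy)
    refine mem_interior.2 ⟨Metric.ball a ε, fun e he => ?_, Metric.isOpen_ball,
      Metric.mem_ball_self hε⟩
    have hLe_mem : L e ∈ affineSpan ℝ S := by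
      rw [hLval]
      have : Q (e - a) +ᵥ a ∈ affineSpan ℝ S :=
        AffineSubspace.vadd_mem_of_mem_direction (by rw [hQval]; exact Submodule.coe_mem _)
          haSpan
      simpa [vadd_eq_add, add_comm] using this
    set z : affineSpan ℝ S := ⟨L e, hLe_mem⟩ with hz
    have hdist : dist z y < ε := by
      rw [Subtype.dist_eq, hya]
      have h0 : L e - a = (V.orthogonalProjectionOnto (e - a) : EuclideanSpace ℝ (Fin k)) := by
        rw [hLval, hQval]; abel
      rw [dist_eq_norm, h0]
      calc ‖(V.orthogonalProjectionOnto (e - a) : EuclideanSpace ℝ (Fin k))‖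
          ≤ ‖V.orthogonalProjectionOnto‖ * ‖e - a‖ := (V.orthogonalProjectionOnto).le_opNorm _
        _ ≤ 1 * ‖e - a‖ := by
            exact mul_le_mul_of_nonneg_right (Submodule.orthogonalProjectionOnto_norm_le V) (norm_nonneg _)
        _ = dist e a := by rw [one_mul, dist_eq_norm]
        _ < ε := he
    have := hball hdist
    simpa [hz] using this
  -- supergradient
  obtain ⟨v, hv⟩ := exists_supergradient_aux hconv' hconc' ha'
  have hLa : L a = a := by rw [hLval]; simp
  have key : ∀ b ∈ S, g b + ⟪b, -v⟫ ≤ g a + ⟪a, -v⟫ := by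
    intro b hb
    have h1 := hv b (hSsub hb)
    simp only [Function.comp_apply, hLmem b hb, hLa] at h1
    have h2 : ⟪v, b - a⟫ = ⟪v, b⟫ - ⟪v, a⟫ := inner_sub_right v b a
    have h3 : ⟪b, -v⟫ = -⟪v, b⟫ := by
      rw [inner_neg_right, real_inner_comm]
    have h4 : ⟪a, -v⟫ = -⟪v, a⟫ := by
      rw [inner_neg_right, real_inner_comm]
    rw [h3, h4]
    linarith
  refine le_antisymm ?_ hge
  calc G a ≤ W (-v) - ((⟪a, -v⟫ : ℝ) : EReal) := by rw [hG]; exact iInf_le _ (-v)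
    _ ≤ ((g a + ⟪a, -v⟫ : ℝ) : EReal) - ((⟪a, -v⟫ : ℝ) : EReal) := by
        refine EReal.sub_le_sub ?_ le_rfl
        rw [hW]
        exact iSup₂_le fun b hb => by exact_mod_cast key b hb
    _ = (g a : EReal) := by rw [← EReal.coe_sub]; norm_num
end

section
/- Let f : ℝ^k → ℝ ∪ {+∞} be convex, not identically +∞, and lower semicontinuous at a point x ∈ ℝ^k. Then the Legendre biconjugate satisfies f**(x) = f(x). -/
open scoped RealInnerProductSpace
open Filter

namespace FenchelMoreauAux

variable {k : ℕ}

lemma coord_abs_le_dist (z w : EuclideanSpace ℝ (Fin k)) (i : Fin k) :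
    |z i - w i| ≤ dist z w := by
  rw [EuclideanSpace.dist_eq]
  have h1 : |z i - w i| = Real.sqrt (dist (z i) (w i) ^ 2) := by
    rw [Real.sqrt_sq_eq_abs, Real.dist_eq, abs_abs]
  rw [h1]
  apply Real.sqrt_le_sqrt
  exact Finset.single_le_sum (f := fun j => dist (z j) (w j) ^ 2)
    (fun j _ => sq_nonneg _) (Finset.mem_univ i)

variable {f : EuclideanSpace ℝ (Fin k) → EReal}

/-- the epigraph -/
def epi (f : EuclideanSpace ℝ (Fin k) → EReal) : Set (EuclideanSpace ℝ (Fin k) × ℝ) :=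
  {p | f p.1 ≤ (p.2 : EReal)}

section basic

variable (hbot : ∀ y, f y ≠ ⊥)
  (hconv : ∀ x y : EuclideanSpace ℝ (Fin k), ∀ a b : ℝ, 0 ≤ a → 0 ≤ b → a + b = 1 →
      f (a • x + b • y) ≤ (a : EReal) * f x + (b : EReal) * f y)

include hbot hconv in
lemma combine2 {u v : EuclideanSpace ℝ (Fin k)} {P Q a b : ℝ}
    (hu : f u ≤ (P : EReal)) (hv : f v ≤ (Q : EReal))
    (ha : 0 ≤ a) (hb : 0 ≤ b) (hab : a + b = 1) :
    f (a • u + b • v) ≤ ((a * P + b * Q : ℝ) : EReal) := by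
  have hut : f u ≠ ⊤ := ne_top_of_le_ne_top (EReal.coe_ne_top P) hu
  have hvt : f v ≠ ⊤ := ne_top_of_le_ne_top (EReal.coe_ne_top Q) hv
  have hup : f u = ((f u).toReal : EReal) := (EReal.coe_toReal hut (hbot u)).symm
  have hvq : f v = ((f v).toReal : EReal) := (EReal.coe_toReal hvt (hbot v)).symm
  set p := (f u).toReal
  set q := (f v).toReal
  have hPp : p ≤ P := by rw [hup] at hu; exact_mod_cast hu
  have hQq : q ≤ Q := by rw [hvq] at hv; exact_mod_cast hv
  calc f (a • u + b • v) ≤ (a : EReal) * f u + (b : EReal) * f v := hconv u v a b ha hb hab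
    _ = ((a * p + b * q : ℝ) : EReal) := by rw [hup, hvq]; norm_cast
    _ ≤ ((a * P + b * Q : ℝ) : EReal) := by
        apply EReal.coe_le_coe_iff.2
        nlinarith

include hbot hconv in
lemma convex_epi : Convex ℝ (epi f) := by
  rintro ⟨u, p⟩ hu ⟨v, q⟩ hv a b ha hb hab
  simp only [epi, Set.mem_setOf_eq] at hu hv ⊢
  exact combine2 hbot hconv hu hv ha hb hab

include hbot hconv in
lemma convex_dom : Convex ℝ {y : EuclideanSpace ℝ (Fin k) | f y ≠ ⊤} := by
  intro u hu v hv a b ha hb hab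
  simp only [Set.mem_setOf_eq] at hu hv ⊢
  have h := combine2 hbot hconv (le_of_eq (EReal.coe_toReal hu (hbot u)).symm)
    (le_of_eq (EReal.coe_toReal hv (hbot v)).symm) ha hb hab
  exact ne_top_of_le_ne_top (EReal.coe_ne_top _) h


lemma sep_generic (S : Set (EuclideanSpace ℝ (Fin k) × ℝ)) (hS : Convex ℝ S)
    (hne : ∃ y r, ((y, r) : EuclideanSpace ℝ (Fin k) × ℝ) ∈ S)
    {y₀ : EuclideanSpace ℝ (Fin k)} {c : ℝ}
    (h : ((y₀, c) : EuclideanSpace ℝ (Fin k) × ℝ) ∉ closure S)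
    (hup : ∀ y r r', ((y, r) : EuclideanSpace ℝ (Fin k) × ℝ) ∈ S → r ≤ r' → (y, r') ∈ S) :
    ∃ (t : EuclideanSpace ℝ (Fin k)) (s u : ℝ), 0 ≤ s ∧ ⟪t, y₀⟫ + s * c < u ∧
      ∀ p ∈ S, u < ⟪t, p.1⟫ + s * p.2 := by
  obtain ⟨φ, u, hφ1, hφ2⟩ :=
    geometric_hahn_banach_point_closed (hS.closure) isClosed_closure h
  set t : EuclideanSpace ℝ (Fin k) :=
    (InnerProductSpace.toDual ℝ _).symm (φ.comp (ContinuousLinearMap.inl ℝ _ ℝ)) with ht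
  set s : ℝ := φ (0, 1) with hs
  have hdec : ∀ (y : EuclideanSpace ℝ (Fin k)) (r : ℝ), φ (y, r) = ⟪t, y⟫ + s * r := by
    intro y r
    have h1 : ⟪t, y⟫ = φ (y, 0) := by
      rw [ht, InnerProductSpace.toDual_symm_apply]; rfl
    have h2 : ((y, r) : EuclideanSpace ℝ (Fin k) × ℝ) = (y, 0) + r • ((0 : EuclideanSpace ℝ (Fin k)), (1:ℝ)) := by
      simp
    rw [h2, map_add, map_smul, smul_eq_mul, h1, hs, mul_comm]
  refine ⟨t, s, u, ?_, ?_, ?_⟩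
  · by_contra hsneg
    push_neg at hsneg
    obtain ⟨y₁, r₁, hy₁⟩ := hne
    obtain ⟨n, hn⟩ := exists_nat_gt ((⟪t, y₁⟫ + s * r₁ - u) / (-s))
    have hmem : ((y₁, r₁ + n) : EuclideanSpace ℝ (Fin k) × ℝ) ∈ S :=
      hup _ _ _ hy₁ (le_add_of_nonneg_right n.cast_nonneg)
    have := hφ2 _ (subset_closure hmem)
    rw [hdec] at this
    have hn' : (⟪t, y₁⟫ + s * r₁ - u) < n * (-s) := (div_lt_iff₀ (by linarith)).1 hn
    nlinarith
  · have := hφ1; rwa [hdec] at this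
  · intro p hp
    have := hφ2 _ (subset_closure hp)
    rwa [hdec] at this


include hbot hconv in
lemma sep (hne : ∃ y, f y ≠ ⊤) {y₀ : EuclideanSpace ℝ (Fin k)} {c : ℝ}
    (h : ((y₀, c) : EuclideanSpace ℝ (Fin k) × ℝ) ∉ closure (epi f)) :
    ∃ (t : EuclideanSpace ℝ (Fin k)) (s u : ℝ), 0 ≤ s ∧ ⟪t, y₀⟫ + s * c < u ∧
      ∀ p ∈ epi f, u < ⟪t, p.1⟫ + s * p.2 := by
  apply sep_generic (epi f) (convex_epi hbot hconv) ?_ h ?_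
  · obtain ⟨y₁, hy₁⟩ := hne
    exact ⟨y₁, (f y₁).toReal, le_of_eq (EReal.coe_toReal hy₁ (hbot y₁)).symm⟩
  · intro y r r' hmem hle
    exact le_trans hmem (EReal.coe_le_coe_iff.2 hle)

include hbot hconv in
lemma cube_bound (z₀ : EuclideanSpace ℝ (Fin k)) (ε M : ℝ) (hε : 0 < ε)
    (hM : ∀ z : EuclideanSpace ℝ (Fin k), (∀ i, |z i - z₀ i| = ε) → f z ≤ (M : EReal)) :
    ∀ z : EuclideanSpace ℝ (Fin k), (∀ i, |z i - z₀ i| ≤ ε) → f z ≤ (M : EReal) := by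
  suffices H : ∀ m : ℕ, ∀ z : EuclideanSpace ℝ (Fin k), (∀ i, |z i - z₀ i| ≤ ε) →
      (∀ i : Fin k, m ≤ (i : ℕ) → |z i - z₀ i| = ε) → f z ≤ (M : EReal) by
    intro z hz
    exact H k z hz (fun i hi => absurd i.isLt (by omega))
  intro m
  induction m with
  | zero => exact fun z hz hex => hM z (fun i => hex i (Nat.zero_le _))
  | succ m ih =>
    intro z hz hex
    by_cases hmk : m < k
    · set i₀ : Fin k := ⟨m, hmk⟩ with hi₀
      set zm : EuclideanSpace ℝ (Fin k) := WithLp.toLp 2 (Function.update z i₀ (z₀ i₀ - ε)) with hzm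
      set zp : EuclideanSpace ℝ (Fin k) := WithLp.toLp 2 (Function.update z i₀ (z₀ i₀ + ε)) with hzp
      have hzi₀ := abs_le.1 (hz i₀)
      set a := (z₀ i₀ + ε - z i₀) / (2 * ε) with ha
      have ha0 : 0 ≤ a := by apply div_nonneg <;> linarith
      have ha1 : a ≤ 1 := by rw [div_le_one (by linarith)]; linarith
      have hε' : ε ≠ 0 := ne_of_gt hε
      have habs1 : |z₀ i₀ - ε - z₀ i₀| = ε := by
        have : z₀ i₀ - ε - z₀ i₀ = -ε := by ring
        rw [this, abs_neg, abs_of_pos hε]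
      have habs2 : |z₀ i₀ + ε - z₀ i₀| = ε := by
        have : z₀ i₀ + ε - z₀ i₀ = ε := by ring
        rw [this, abs_of_pos hε]
      have hcoords : ∀ (w : EuclideanSpace ℝ (Fin k)) (i : Fin k) (v : ℝ),
          (WithLp.toLp 2 (Function.update w i₀ v) : EuclideanSpace ℝ (Fin k)) i = if i = i₀ then v else w i := by
        intro w i v
        exact Function.update_apply w i₀ v i
      have hzmle : ∀ i, |zm i - z₀ i| ≤ ε := by
        intro i
        rw [hzm, hcoords]
        by_cases hi : i = i₀
        · subst hi; rw [if_pos rfl]; exact le_of_eq habs1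
        · rw [if_neg hi]; exact hz i
      have hzple : ∀ i, |zp i - z₀ i| ≤ ε := by
        intro i
        rw [hzp, hcoords]
        by_cases hi : i = i₀
        · subst hi; rw [if_pos rfl]; exact le_of_eq habs2
        · rw [if_neg hi]; exact hz i
      have hzmex : ∀ i : Fin k, m ≤ (i : ℕ) → |zm i - z₀ i| = ε := by
        intro i hi
        rw [hzm, hcoords]
        by_cases hii : i = i₀
        · subst hii; rw [if_pos rfl]; exact habs1
        · rw [if_neg hii]
          refine hex i ?_
          have : (i : ℕ) ≠ m := fun h => hii (Fin.ext h)
          omega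
      have hzpex : ∀ i : Fin k, m ≤ (i : ℕ) → |zp i - z₀ i| = ε := by
        intro i hi
        rw [hzp, hcoords]
        by_cases hii : i = i₀
        · subst hii; rw [if_pos rfl]; exact habs2
        · rw [if_neg hii]
          refine hex i ?_
          have : (i : ℕ) ≠ m := fun h => hii (Fin.ext h)
          omega
      have hrepr : z = a • zm + (1 - a) • zp := by
        ext i
        have h1 : (a • zm + (1 - a) • zp) i = a * zm i + (1 - a) * zp i := by
          simp [PiLp.add_apply, PiLp.smul_apply, smul_eq_mul]
        rw [h1, hzm, hzp, hcoords, hcoords]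
        by_cases hi : i = i₀
        · subst hi; simp only [if_pos rfl, ↓reduceIte]
          rw [ha]; field_simp; ring
        · rw [if_neg hi, if_neg hi]; ring
      have := combine2 hbot hconv (a := a) (b := 1 - a) (ih zm hzmle hzmex)
        (ih zp hzple hzpex) ha0 (by linarith) (by ring)
      rw [← hrepr] at this
      convert this using 2
      ring
    · exact ih z hz (fun i hi => absurd i.isLt (by omega))


include hbot hconv in
lemma exists_not_closure_of_interior {z₀ : EuclideanSpace ℝ (Fin k)}
    (hz₀ : z₀ ∈ interior {y : EuclideanSpace ℝ (Fin k) | f y ≠ ⊤}) :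
    ∃ c : ℝ, ((z₀, c) : EuclideanSpace ℝ (Fin k) × ℝ) ∉ closure (epi f) := by
  obtain ⟨r, hr, hball⟩ := Metric.mem_nhds_iff.1 (mem_interior_iff_mem_nhds.1 hz₀)
  set ε : ℝ := r / (2 * (Real.sqrt k + 1)) with hεdef
  have hsq : 0 ≤ Real.sqrt k := Real.sqrt_nonneg _
  have hε : 0 < ε := by positivity
  -- any point of the cube lies in the ball, hence in the domain
  have hcube_dom : ∀ z : EuclideanSpace ℝ (Fin k), (∀ i, |z i - z₀ i| ≤ ε) → f z ≠ ⊤ := by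
    intro z hz
    have hdist : dist z z₀ < r := by
      have h1 : dist z z₀ ≤ Real.sqrt (∑ _i : Fin k, ε ^ 2) := by
        rw [EuclideanSpace.dist_eq]
        apply Real.sqrt_le_sqrt
        apply Finset.sum_le_sum
        intro i _
        have := hz i
        rw [Real.dist_eq]
        nlinarith [abs_nonneg (z i - z₀ i), abs_sq (z i - z₀ i),
          sq_abs (z i - z₀ i)]
      have h2 : Real.sqrt (∑ _i : Fin k, ε ^ 2) = Real.sqrt k * ε := by
        rw [Finset.sum_const, Finset.card_univ, Fintype.card_fin, nsmul_eq_mul]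
        rw [show (k : ℝ) * ε ^ 2 = (Real.sqrt k * ε) ^ 2 by
          rw [mul_pow, Real.sq_sqrt (Nat.cast_nonneg k)]]
        exact Real.sqrt_sq (by positivity)
      have h3 : Real.sqrt k * ε < r := by
        rw [hεdef]
        rw [div_eq_mul_inv]
        have h4 : Real.sqrt k * (r * (2 * (Real.sqrt k + 1))⁻¹) 
            = r * (Real.sqrt k / (2 * (Real.sqrt k + 1))) := by ring
        rw [h4]
        have h5 : Real.sqrt k / (2 * (Real.sqrt k + 1)) < 1 := by
          rw [div_lt_one (by positivity)]; linarith
        nlinarith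
      calc dist z z₀ ≤ Real.sqrt k * ε := h1.trans (le_of_eq h2)
        _ < r := h3
    exact hball (Metric.mem_ball.2 hdist)
  -- bound over the vertices of the cube
  set vtx : (Fin k → Bool) → EuclideanSpace ℝ (Fin k) :=
    fun σ => WithLp.toLp 2 (fun i => z₀ i + (if σ i then ε else -ε)) with hvtx
  have hvtx_cube : ∀ σ, ∀ i, |vtx σ i - z₀ i| = ε := by
    intro σ i
    rw [hvtx]
    by_cases h : σ i <;> simp [h, abs_of_pos hε]
  set M : ℝ := Finset.univ.sup' (Finset.univ_nonempty) 
    (fun σ : Fin k → Bool => (f (vtx σ)).toReal) with hMdef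
  have hM : ∀ z : EuclideanSpace ℝ (Fin k), (∀ i, |z i - z₀ i| = ε) → f z ≤ (M : EReal) := by
    intro z hz
    obtain ⟨σ, hzvtx⟩ : ∃ σ, z = vtx σ := by
      refine ⟨fun i => decide (z i = z₀ i + ε), ?_⟩
      ext i
      rw [hvtx]
      by_cases hzi : z i = z₀ i + ε
      · simp [hzi]
      · have h2 : z i = z₀ i - ε := by
          rcases (abs_eq (le_of_lt hε)).1 (hz i) with h | h
          · exact absurd (by linarith) hzi
          · linarith
        conv_lhs => rw [h2]
        simp [hzi, sub_eq_add_neg]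
    rw [hzvtx]
    have hne : f (vtx σ) ≠ ⊤ := hcube_dom _ (fun i => le_of_eq (hvtx_cube σ i))
    rw [← EReal.coe_toReal hne (hbot _)]
    exact_mod_cast Finset.le_sup' (fun σ : Fin k → Bool => (f (vtx σ)).toReal)
      (Finset.mem_univ σ)
  have hCB := cube_bound hbot hconv z₀ ε M hε hM
  -- now pick c very negative
  have hz₀dom : f z₀ ≠ ⊤ := interior_subset hz₀
  set ρ₀ : ℝ := (f z₀).toReal with hρ₀
  refine ⟨2 * ρ₀ - M - 2, fun hmem => ?_⟩
  rw [Metric.mem_closure_iff] at hmem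
  obtain ⟨⟨z, ρ⟩, hzρ, hd⟩ := hmem (min ε 1) (lt_min hε one_pos)
  rw [Prod.dist_eq] at hd
  have hd1 : dist z₀ z < ε := lt_of_le_of_lt (le_max_left _ _) (lt_of_lt_of_le hd (min_le_left _ _))
  have hd2 : |ρ - (2 * ρ₀ - M - 2)| < 1 := by
    have := lt_of_le_of_lt (le_max_right (dist z₀ z) _) (lt_of_lt_of_le hd (min_le_right _ _))
    rwa [Real.dist_eq, abs_sub_comm] at this
  have hρlt : ρ < 2 * ρ₀ - M - 1 := by
    rcases abs_lt.1 hd2 with ⟨h1, h2⟩; linarith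
  -- reflection point
  set v : EuclideanSpace ℝ (Fin k) := z₀ + (z₀ - z) with hv
  have hvcube : ∀ i, |v i - z₀ i| ≤ ε := by
    intro i
    have h1 : v i - z₀ i = z₀ i - z i := by
      rw [hv]; simp only [PiLp.add_apply, PiLp.sub_apply]; ring
    rw [h1]
    exact le_of_lt (lt_of_le_of_lt (coord_abs_le_dist z₀ z i) hd1)
  have hfv : f v ≤ (M : EReal) := hCB v hvcube
  have hfz : f z ≤ ((2 * ρ₀ - M - 1 : ℝ) : EReal) := by
    refine le_trans hzρ ?_
    exact_mod_cast le_of_lt hρlt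
  have hmid : z₀ = (1/2 : ℝ) • z + (1/2 : ℝ) • v := by
    ext i
    have : ((1/2 : ℝ) • z + (1/2 : ℝ) • v) i = (1/2) * z i + (1/2) * v i := by
      simp [PiLp.add_apply, PiLp.smul_apply, smul_eq_mul]
    rw [this, hv]
    simp only [PiLp.add_apply, PiLp.sub_apply]
    ring
  have := combine2 hbot hconv (a := 1/2) (b := 1/2) hfz hfv (by norm_num) (by norm_num)
    (by norm_num)
  rw [← hmid] at this
  have hfz₀ : f z₀ = (ρ₀ : EReal) := (EReal.coe_toReal hz₀dom (hbot z₀)).symm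
  rw [hfz₀] at this
  have : ρ₀ ≤ 1/2 * (2 * ρ₀ - M - 1) + 1/2 * M := by exact_mod_cast this
  linarith


-- nonvertical separation gives an affine minorant
include hbot hconv in
lemma minorant_of_exists (hne : ∃ y, f y ≠ ⊤) {y₀ : EuclideanSpace ℝ (Fin k)}
    (hy₀ : f y₀ ≠ ⊤) {c : ℝ}
    (h : ((y₀, c) : EuclideanSpace ℝ (Fin k) × ℝ) ∉ closure (epi f)) :
    ∃ (w : EuclideanSpace ℝ (Fin k)) (b : ℝ),
      ∀ y, ((⟪w, y⟫ : ℝ) : EReal) - (b : EReal) ≤ f y := by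
  obtain ⟨t, s, u, hs0, hlt, hgt⟩ := sep hbot hconv hne h
  have hρ₀ : f y₀ = (((f y₀).toReal : ℝ) : EReal) := (EReal.coe_toReal hy₀ (hbot y₀)).symm
  have hy₀mem : ((y₀, (f y₀).toReal) : EuclideanSpace ℝ (Fin k) × ℝ) ∈ epi f :=
    le_of_eq hρ₀
  have hs : 0 < s := by
    rcases hs0.eq_or_lt with h0 | h0
    · exfalso
      have h1 := hgt _ hy₀mem
      simp only [← h0, zero_mul, add_zero] at h1 hlt
      linarith
    · exact h0
  refine ⟨(-s⁻¹) • t, -(u/s), fun y => ?_⟩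
  by_cases hy : f y = ⊤
  · rw [hy]; exact le_top
  · have hρ : f y = (((f y).toReal : ℝ) : EReal) := (EReal.coe_toReal hy (hbot y)).symm
    set ρ := (f y).toReal
    have hmem : ((y, ρ) : EuclideanSpace ℝ (Fin k) × ℝ) ∈ epi f := le_of_eq hρ
    have h1 := hgt _ hmem
    simp only at h1
    have hinner : ⟪(-s⁻¹) • t, y⟫ = -s⁻¹ * ⟪t, y⟫ := real_inner_smul_left t y (-s⁻¹)
    rw [hρ, hinner, ← EReal.coe_sub]
    apply EReal.coe_le_coe_iff.2
    have hsne : s ≠ 0 := ne_of_gt hs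
    rw [div_eq_mul_inv]
    have h2 : u * s⁻¹ < (⟪t, y⟫ + s * ρ) * s⁻¹ :=
      mul_lt_mul_of_pos_right h1 (inv_pos.2 hs)
    have h3 : (⟪t, y⟫ + s * ρ) * s⁻¹ = ⟪t, y⟫ * s⁻¹ + ρ := by
      field_simp
    nlinarith
-- full minorant
include hbot hconv in
lemma minorant (hne : ∃ y, f y ≠ ⊤) :
    ∃ (w : EuclideanSpace ℝ (Fin k)) (b : ℝ),
      ∀ y, ((⟪w, y⟫ : ℝ) : EReal) - (b : EReal) ≤ f y := by
  classical
  obtain ⟨y₀, hy₀⟩ := hne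
  set D : Set (EuclideanSpace ℝ (Fin k)) := {y | f y ≠ ⊤} with hD
  set V : Submodule ℝ (EuclideanSpace ℝ (Fin k)) :=
    Submodule.span ℝ ((fun y => y - y₀) '' D) with hV
  set K : EuclideanSpace ℝ (Fin k) → EuclideanSpace ℝ (Fin k) :=
    fun y => y₀ + ((Submodule.orthogonalProjectionOnto V (y - y₀) : V) : EuclideanSpace ℝ (Fin k)) with hK
  -- K is affine on convex combinations
  have hKaff : ∀ (x y : EuclideanSpace ℝ (Fin k)) (a b : ℝ), a + b = 1 →
      K (a • x + b • y) = a • K x + b • K y := by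
    intro x y a b hab
    rw [hK]
    simp only
    have h2 : a • y₀ + b • y₀ = y₀ := by rw [← add_smul, hab, one_smul]
    have h1 : a • x + b • y - y₀ = a • (x - y₀) + b • (y - y₀) := by
      calc a • x + b • y - y₀ = a • x + b • y - (a • y₀ + b • y₀) := by rw [h2]
        _ = a • (x - y₀) + b • (y - y₀) := by module
    rw [h1, map_add, map_smul, map_smul]
    push_cast
    calc y₀ + (a • ((Submodule.orthogonalProjectionOnto V (x - y₀) : V) : EuclideanSpace ℝ (Fin k))
          + b • ((Submodule.orthogonalProjectionOnto V (y - y₀) : V) : EuclideanSpace ℝ (Fin k)))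
        = (a • y₀ + b • y₀) + (a • ((Submodule.orthogonalProjectionOnto V (x - y₀) : V) : EuclideanSpace ℝ (Fin k))
          + b • ((Submodule.orthogonalProjectionOnto V (y - y₀) : V) : EuclideanSpace ℝ (Fin k))) := by rw [h2]
      _ = a • (y₀ + ((Submodule.orthogonalProjectionOnto V (x - y₀) : V) : EuclideanSpace ℝ (Fin k)))
          + b • (y₀ + ((Submodule.orthogonalProjectionOnto V (y - y₀) : V) : EuclideanSpace ℝ (Fin k))) := by
            module
  -- K fixes points of D
  have hKfix : ∀ y ∈ D, K y = y := by
    intro y hy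
    have hmem : y - y₀ ∈ V := Submodule.subset_span ⟨y, hy, rfl⟩
    rw [hK]
    simp only
    rw [show ((Submodule.orthogonalProjectionOnto V (y - y₀) : V) : EuclideanSpace ℝ (Fin k)) = y - y₀ from Submodule.starProjection_eq_self_iff.2 hmem]
    abel
  have hy₀D : y₀ ∈ D := hy₀
  have hKy₀ : K y₀ = y₀ := hKfix y₀ hy₀D
  -- the function g
  set g : EuclideanSpace ℝ (Fin k) → EReal := fun y => f (K y) with hg
  have hgbot : ∀ y, g y ≠ ⊥ := fun y => hbot _
  have hgconv : ∀ x y : EuclideanSpace ℝ (Fin k), ∀ a b : ℝ, 0 ≤ a → 0 ≤ b → a + b = 1 →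
      g (a • x + b • y) ≤ (a : EReal) * g x + (b : EReal) * g y := by
    intro x y a b ha hb hab
    rw [hg]
    simp only
    rw [hKaff x y a b hab]
    exact hconv _ _ a b ha hb hab
  have hgne : ∃ y, g y ≠ ⊤ := ⟨y₀, by rw [hg]; simp only; rw [hKy₀]; exact hy₀⟩
  -- domain of g
  have hgdom : {y | g y ≠ ⊤} = K ⁻¹' D := rfl
  -- affine span of the domain of g is everything
  have hspan : affineSpan ℝ {y | g y ≠ ⊤} = ⊤ := by
    have hy₀g : y₀ ∈ {y | g y ≠ ⊤} := by
      simp only [Set.mem_setOf_eq, hg]; rw [hKy₀]; exact hy₀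
    rw [AffineSubspace.affineSpan_eq_top_iff_vectorSpan_eq_top_of_nonempty ℝ _ _ ⟨y₀, hy₀g⟩]
    rw [eq_top_iff, ← Submodule.sup_orthogonal_of_hasOrthogonalProjection (K := V)]
    apply sup_le
    · rw [hV, Submodule.span_le]
      rintro _ ⟨y, hy, rfl⟩
      have hyg : y ∈ {y | g y ≠ ⊤} := by
        simp only [Set.mem_setOf_eq, hg]; rw [hKfix y hy]; exact hy
      have := vsub_mem_vectorSpan ℝ hyg hy₀g
      simpa using this
    · intro ν hν
      have hmem : y₀ + ν ∈ {y | g y ≠ ⊤} := by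
        simp only [Set.mem_setOf_eq, hg]
        have : K (y₀ + ν) = y₀ := by
          rw [hK]; simp only
          have h1 : y₀ + ν - y₀ = ν := by abel
          rw [h1, Submodule.orthogonalProjectionOnto_apply_of_mem_orthogonal hν]
          simp
        rw [this]; exact hy₀
      have := vsub_mem_vectorSpan ℝ hmem hy₀g
      simpa using this
  -- interior of domain of g is nonempty
  have hgdomconv : Convex ℝ {y | g y ≠ ⊤} := convex_dom hgbot hgconv
  have hint : (interior {y | g y ≠ ⊤}).Nonempty := by
    rw [hgdomconv.interior_nonempty_iff_affineSpan_eq_top]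
    exact hspan
  obtain ⟨z₀, hz₀⟩ := hint
  obtain ⟨c, hc⟩ := exists_not_closure_of_interior hgbot hgconv hz₀
  obtain ⟨w, b, hwb⟩ := minorant_of_exists hgbot hgconv hgne (interior_subset hz₀) hc
  refine ⟨w, b, fun y => ?_⟩
  by_cases hy : f y = ⊤
  · rw [hy]; exact le_top
  · have := hwb y
    rw [hg] at this
    simp only at this
    rwa [hKfix y hy] at this


end basic

end FenchelMoreauAux

open FenchelMoreauAux in
/-- Fenchel–Moreau: if `f : ℝ^k → ℝ ∪ {+∞}` is convex, not identically `+∞`, and lower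
semicontinuous at `x`, then the Legendre biconjugate `f**` agrees with `f` at `x`. -/
theorem legendre_biconjugate_eq
    {k : ℕ} (f : EuclideanSpace ℝ (Fin k) → EReal)
    (hbot : ∀ y, f y ≠ ⊥)
    (hne : ∃ y, f y ≠ ⊤)
    (hconv : ∀ x y : EuclideanSpace ℝ (Fin k), ∀ a b : ℝ, 0 ≤ a → 0 ≤ b → a + b = 1 →
      f (a • x + b • y) ≤ (a : EReal) * f x + (b : EReal) * f y)
    (fstar : EuclideanSpace ℝ (Fin k) → EReal)
    (hfstar : ∀ t, fstar t = ⨆ y, (((⟪t, y⟫ : ℝ) : EReal) - f y))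
    (x : EuclideanSpace ℝ (Fin k))
    (hlsc : f x ≤ Filter.liminf f (nhds x)) :
    (⨆ t, (((⟪t, x⟫ : ℝ) : EReal) - fstar t)) = f x := by
  refine le_antisymm (iSup_le fun t => ?_) ?_
  · -- easy direction: f**(x) ≤ f(x)
    by_cases hfx : f x = ⊤
    · rw [hfx]; exact le_top
    · have hfxr : f x = (((f x).toReal : ℝ) : EReal) := (EReal.coe_toReal hfx (hbot x)).symm
      set ρ := (f x).toReal
      have h1 : ((⟪t, x⟫ - ρ : ℝ) : EReal) ≤ fstar t := by
        rw [hfstar, EReal.coe_sub, ← hfxr]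
        exact le_iSup (fun y => ((⟪t, y⟫ : ℝ) : EReal) - f y) x
      by_cases hft : fstar t = ⊤
      · rw [hft]
        rw [hfxr]
        have : ((⟪t, x⟫ : ℝ) : EReal) - ⊤ = ⊥ := by
          rw [sub_eq_add_neg]; simp
        rw [this]; exact bot_le
      · have hftb : fstar t ≠ ⊥ := by
          intro hcon; rw [hcon] at h1; exact (not_le.2 (bot_lt_iff_ne_bot.2 (EReal.coe_ne_bot _))) h1
        have hftr : fstar t = (((fstar t).toReal : ℝ) : EReal) := (EReal.coe_toReal hft hftb).symm
        set τ := (fstar t).toReal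
        rw [hftr, hfxr, ← EReal.coe_sub]
        apply EReal.coe_le_coe_iff.2
        rw [hftr] at h1
        have h2 : ⟪t, x⟫ - ρ ≤ τ := EReal.coe_le_coe_iff.1 h1
        linarith
  · -- hard direction
    by_contra hcon
    push_neg at hcon
    obtain ⟨c, hc1, hc2⟩ := EReal.exists_between_coe_real hcon
    -- (x, c) is not in the closure of the epigraph
    have hxc : ((x, c) : EuclideanSpace ℝ (Fin k) × ℝ) ∉ closure (epi f) := by
      intro hmem
      rw [mem_closure_iff_seq_limit] at hmem
      obtain ⟨p, hp1, hp2⟩ := hmem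
      have hz : Tendsto (fun n => (p n).1) atTop (nhds x) :=
        ((continuous_fst.tendsto _).comp hp2)
      have hr : Tendsto (fun n => (p n).2) atTop (nhds c) :=
        ((continuous_snd.tendsto _).comp hp2)
      have hle : f x ≤ (c : EReal) := by
        calc f x ≤ liminf f (nhds x) := hlsc
          _ ≤ liminf f (Filter.map (fun n => (p n).1) atTop) :=
              liminf_le_liminf_of_le hz
          _ = liminf (fun n => f ((p n).1)) atTop := by
              rw [Filter.liminf, Filter.liminf, Filter.map_map]; rfl
          _ ≤ liminf (fun n => (((p n).2 : ℝ) : EReal)) atTop := by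
              apply liminf_le_liminf (Filter.Eventually.of_forall (fun n => hp1 n)) <;>
                isBoundedDefault
          _ = (c : EReal) := by
              apply Filter.Tendsto.liminf_eq
              exact EReal.tendsto_coe.2 hr
      exact absurd (lt_of_le_of_lt hle hc2) (lt_irrefl _)
    obtain ⟨t, s, u, hs0, hlt, hgt⟩ := sep hbot hconv hne hxc
    rcases hs0.eq_or_lt with hs | hs
    · -- vertical case: use the affine minorant
      obtain ⟨w, b, hwb⟩ := minorant hbot hconv hne
      rw [← hs] at hlt hgt
      simp only [zero_mul, add_zero] at hlt hgt
      have hupos : 0 < u - ⟪t, x⟫ := by linarith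
      set lam : ℝ := max 1 ((c + b - ⟪w, x⟫ + 1) / (u - ⟪t, x⟫)) with hlam
      have hlam1 : (1:ℝ) ≤ lam := le_max_left _ _
      have hlampos : 0 < lam := lt_of_lt_of_le one_pos hlam1
      set t' : EuclideanSpace ℝ (Fin k) := w - lam • t with ht'
      have hinner : ∀ y, ⟪t', y⟫ = ⟪w, y⟫ - lam * ⟪t, y⟫ := by
        intro y
        rw [ht', inner_sub_left, real_inner_smul_left]
      have hfs : fstar t' ≤ ((b - lam * u : ℝ) : EReal) := by
        rw [hfstar]
        apply iSup_le
        intro y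
        by_cases hy : f y = ⊤
        · rw [hy]
          have : ((⟪t', y⟫ : ℝ) : EReal) - ⊤ = ⊥ := by rw [sub_eq_add_neg]; simp
          rw [this]; exact bot_le
        · have hρ : f y = (((f y).toReal : ℝ) : EReal) := (EReal.coe_toReal hy (hbot y)).symm
          set ρ := (f y).toReal
          have hmem : ((y, ρ) : EuclideanSpace ℝ (Fin k) × ℝ) ∈ epi f := le_of_eq hρ
          have h1 : u < ⟪t, y⟫ := hgt _ hmem
          have h2 : ⟪w, y⟫ - b ≤ ρ := by
            have := hwb y
            rw [hρ, ← EReal.coe_sub] at this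
            exact EReal.coe_le_coe_iff.1 this
          rw [hρ, ← EReal.coe_sub]
          apply EReal.coe_le_coe_iff.2
          rw [hinner]
          nlinarith
      have hbig : ((c : ℝ) : EReal) < ((⟪t', x⟫ : ℝ) : EReal) - fstar t' := by
        apply lt_of_lt_of_le (b := ((⟪t', x⟫ - (b - lam * u) : ℝ) : EReal))
        · apply EReal.coe_lt_coe_iff.2
          rw [hinner]
          have h3 : (c + b - ⟪w, x⟫ + 1) ≤ lam * (u - ⟪t, x⟫) := by
            have hq : (c + b - ⟪w, x⟫ + 1) / (u - ⟪t, x⟫) ≤ lam := le_max_right _ _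
            have hne' : u - ⟪t, x⟫ ≠ 0 := ne_of_gt hupos
            calc c + b - ⟪w, x⟫ + 1
                = ((c + b - ⟪w, x⟫ + 1) / (u - ⟪t, x⟫)) * (u - ⟪t, x⟫) :=
                  (div_mul_cancel₀ _ hne').symm
              _ ≤ lam * (u - ⟪t, x⟫) := mul_le_mul_of_nonneg_right hq (le_of_lt hupos)
          nlinarith
        · rw [EReal.coe_sub]
          exact EReal.sub_le_sub (le_refl _) hfs
      have : ((c : ℝ) : EReal) < ⨆ t, (((⟪t, x⟫ : ℝ) : EReal) - fstar t) :=
        lt_of_lt_of_le hbig (le_iSup (fun t => (((⟪t, x⟫ : ℝ) : EReal) - fstar t)) t')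
      exact absurd (lt_trans hc1 this) (lt_irrefl _)
    · -- nonvertical case
      set t' : EuclideanSpace ℝ (Fin k) := (-s⁻¹) • t with ht'
      have hinner : ∀ y, ⟪t', y⟫ = -s⁻¹ * ⟪t, y⟫ := fun y => real_inner_smul_left t y _
      have hfs : fstar t' ≤ ((-(u/s) : ℝ) : EReal) := by
        rw [hfstar]
        apply iSup_le
        intro y
        by_cases hy : f y = ⊤
        · rw [hy]
          have : ((⟪t', y⟫ : ℝ) : EReal) - ⊤ = ⊥ := by rw [sub_eq_add_neg]; simp
          rw [this]; exact bot_le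
        · have hρ : f y = (((f y).toReal : ℝ) : EReal) := (EReal.coe_toReal hy (hbot y)).symm
          set ρ := (f y).toReal
          have hmem : ((y, ρ) : EuclideanSpace ℝ (Fin k) × ℝ) ∈ epi f := le_of_eq hρ
          have h1 : u < ⟪t, y⟫ + s * ρ := hgt _ hmem
          rw [hρ, ← EReal.coe_sub]
          apply EReal.coe_le_coe_iff.2
          rw [hinner]
          have h2 : u * s⁻¹ < (⟪t, y⟫ + s * ρ) * s⁻¹ :=
            mul_lt_mul_of_pos_right h1 (inv_pos.2 hs)
          have hsne : s ≠ 0 := ne_of_gt hs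
          have h3 : (⟪t, y⟫ + s * ρ) * s⁻¹ = ⟪t, y⟫ * s⁻¹ + ρ := by field_simp
          rw [div_eq_mul_inv]
          nlinarith
      have hbig : ((c : ℝ) : EReal) < ((⟪t', x⟫ : ℝ) : EReal) - fstar t' := by
        apply lt_of_lt_of_le (b := ((⟪t', x⟫ - (-(u/s)) : ℝ) : EReal))
        · apply EReal.coe_lt_coe_iff.2
          rw [hinner]
          have hsne : s ≠ 0 := ne_of_gt hs
          have h2 : (⟪t, x⟫ + s * c) * s⁻¹ < u * s⁻¹ :=
            mul_lt_mul_of_pos_right hlt (inv_pos.2 hs)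
          have h3 : (⟪t, x⟫ + s * c) * s⁻¹ = ⟪t, x⟫ * s⁻¹ + c := by field_simp
          rw [div_eq_mul_inv]
          nlinarith
        · rw [EReal.coe_sub]
          exact EReal.sub_le_sub (le_refl _) hfs
      have : ((c : ℝ) : EReal) < ⨆ t, (((⟪t, x⟫ : ℝ) : EReal) - fstar t) :=
        lt_of_lt_of_le hbig (le_iSup (fun t => (((⟪t, x⟫ : ℝ) : EReal) - fstar t)) t')
      exact absurd (lt_trans hc1 this) (lt_irrefl _)
end

section
/- Let V be a finite dimensional real vector space and C₁, C₂ convex cones in V with the closure of C₁ minus the origin contained in the interior of C₂. Then C₁ is bounded in the Hilbert projective metric of C₂, i.e., there exists K such that d_{C₂}(v,w) ≤ K for all nonzero v, w ∈ C₁. -/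
variable {V : Type*} [NormedAddCommGroup V] [NormedSpace ℝ V]

/-- `α(v,w) = sup {λ > 0 : w - λ•v ∈ C}`. -/
noncomputable def hilbertAlpha (C : Set V) (v w : V) : ℝ :=
  sSup {l : ℝ | 0 < l ∧ w - l • v ∈ C}

/-- `β(v,w) = inf {μ > 0 : μ•v - w ∈ C}`. -/
noncomputable def hilbertBeta (C : Set V) (v w : V) : ℝ :=
  sInf {m : ℝ | 0 < m ∧ m • v - w ∈ C}

/-- The Hilbert projective (pseudo-)metric of the cone `C`. -/
noncomputable def hilbertDist (C : Set V) (v w : V) : ℝ :=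
  Real.log (hilbertBeta C v w / hilbertAlpha C v w)

/-- If `C₁`, `C₂` are convex cones in a finite dimensional real vector space with
`closure C₁ \ {0} ⊆ interior C₂`, then `C₁` is bounded in the Hilbert projective
metric of `C₂`. -/
theorem hilbert_bounded_of_compactly_contained
    [FiniteDimensional ℝ V]
    (C₁ C₂ : Set V)
    (hconv₁ : Convex ℝ C₁) (hcone₁ : ∀ r : ℝ, 0 < r → ∀ v ∈ C₁, r • v ∈ C₁)
    (hconv₂ : Convex ℝ C₂) (hcone₂ : ∀ r : ℝ, 0 < r → ∀ v ∈ C₂, r • v ∈ C₂)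
    (hsub : closure C₁ \ {0} ⊆ interior C₂) :
    ∃ K : ℝ, ∀ v ∈ C₁, v ≠ 0 → ∀ w ∈ C₁, w ≠ 0 → hilbertDist C₂ v w ≤ K := by
  classical
  set S : Set V := closure C₁ ∩ Metric.sphere (0 : V) 1 with hS
  have hScompact : IsCompact S := by
    apply Metric.isCompact_of_isClosed_isBounded
    · exact isClosed_closure.inter Metric.isClosed_sphere
    · exact (Metric.isBounded_sphere).subset Set.inter_subset_right
  have hSsub : S ⊆ interior C₂ := by
    intro u hu
    apply hsub
    refine ⟨hu.1, ?_⟩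
    have : ‖u‖ = 1 := by simpa using hu.2
    simp only [Set.mem_singleton_iff]
    intro h
    rw [h] at this
    simp at this
  obtain ⟨δ, hδpos, hδ⟩ := hScompact.exists_thickening_subset_open isOpen_interior hSsub
  set ε : ℝ := min δ 1 with hεdef
  have hεpos : 0 < ε := lt_min hδpos one_pos
  have hε1 : ε ≤ 1 := min_le_right _ _
  have hball : ∀ u ∈ S, Metric.ball u ε ⊆ C₂ := by
    intro u hu x hx
    apply interior_subset
    apply hδ
    rw [Metric.mem_thickening_iff]
    exact ⟨u, hu, lt_of_lt_of_le hx (min_le_left _ _)⟩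
  have hK0 : (1 : ℝ) ≤ 4 / ε ^ 2 := by
    rw [one_le_div (by positivity)]
    nlinarith
  refine ⟨Real.log (4 / ε ^ 2), ?_⟩
  intro v hv hv0 w hw hw0
  have hvn : (0 : ℝ) < ‖v‖ := norm_pos_iff.2 hv0
  have hwn : (0 : ℝ) < ‖w‖ := norm_pos_iff.2 hw0
  set v' : V := ‖v‖⁻¹ • v with hv'def
  set w' : V := ‖w‖⁻¹ • w with hw'def
  have hv'norm : ‖v'‖ = 1 := by
    rw [hv'def, norm_smul, norm_inv, norm_norm, inv_mul_cancel₀ hvn.ne']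
  have hw'norm : ‖w'‖ = 1 := by
    rw [hw'def, norm_smul, norm_inv, norm_norm, inv_mul_cancel₀ hwn.ne']
  have hv'S : v' ∈ S :=
    ⟨subset_closure (hcone₁ _ (inv_pos.2 hvn) v hv), by simpa using hv'norm⟩
  have hw'S : w' ∈ S :=
    ⟨subset_closure (hcone₁ _ (inv_pos.2 hwn) w hw), by simpa using hw'norm⟩
  set a : ℝ := (ε / 2) * (‖w‖ / ‖v‖) with hadef
  set b : ℝ := (2 / ε) * (‖w‖ / ‖v‖) with hbdef
  have hapos : 0 < a := by positivity
  have hbpos : 0 < b := by positivity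
  -- a belongs to the α-set
  have hamem : a ∈ {l : ℝ | 0 < l ∧ w - l • v ∈ C₂} := by
    refine ⟨hapos, ?_⟩
    have key : w - a • v = ‖w‖ • (w' - (ε / 2) • v') := by
      rw [hv'def, hw'def, hadef]
      match_scalars <;> field_simp <;> ring
    rw [key]
    apply hcone₂ _ hwn
    apply hball w' hw'S
    rw [Metric.mem_ball]
    have : dist (w' - (ε / 2) • v') w' = ε / 2 := by
      rw [dist_eq_norm]
      simp [norm_smul, hv'norm, abs_of_pos (by positivity : (0:ℝ) < ε / 2), abs_of_pos hεpos]
    rw [this]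
    linarith
  -- b belongs to the β-set
  have hbmem : b ∈ {m : ℝ | 0 < m ∧ m • v - w ∈ C₂} := by
    refine ⟨hbpos, ?_⟩
    have key : b • v - w = (‖w‖ * (2 / ε)) • (v' - (ε / 2) • w') := by
      rw [hv'def, hw'def, hbdef]
      match_scalars <;> field_simp <;> ring
    rw [key]
    apply hcone₂ _ (by positivity)
    apply hball v' hv'S
    rw [Metric.mem_ball]
    have : dist (v' - (ε / 2) • w') v' = ε / 2 := by
      rw [dist_eq_norm]
      simp [norm_smul, hw'norm, abs_of_pos (by positivity : (0:ℝ) < ε / 2), abs_of_pos hεpos]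
    rw [this]
    linarith
  have hβle : hilbertBeta C₂ v w ≤ b :=
    csInf_le ⟨0, fun x hx => hx.1.le⟩ hbmem
  have hβ0 : 0 ≤ hilbertBeta C₂ v w :=
    le_csInf ⟨b, hbmem⟩ fun x hx => hx.1.le
  by_cases hbdd : BddAbove {l : ℝ | 0 < l ∧ w - l • v ∈ C₂}
  · have hαge : a ≤ hilbertAlpha C₂ v w := le_csSup hbdd hamem
    have hαpos : 0 < hilbertAlpha C₂ v w := hapos.trans_le hαge
    have hratio : hilbertBeta C₂ v w / hilbertAlpha C₂ v w ≤ b / a :=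
      div_le_div₀ hbpos.le hβle hapos hαge
    have hba : b / a = 4 / ε ^ 2 := by
      rw [hbdef, hadef]
      field_simp
      ring
    rw [hba] at hratio
    rcases (div_nonneg hβ0 hαpos.le).eq_or_lt with h | h
    · rw [hilbertDist, ← h, Real.log_zero]
      exact Real.log_nonneg hK0
    · exact Real.log_le_log h hratio
  · have hα0 : hilbertAlpha C₂ v w = 0 := Real.sSup_of_not_bddAbove hbdd
    rw [hilbertDist, hα0, div_zero, Real.log_zero]
    exact Real.log_nonneg hK0
end

section
/- Let D be a k×k real diagonal matrix and let e be a coordinate eigenvector with |De| = ‖D‖ (operator norm). Suppose v is a unit vector and r, K > 0 are such that |log‖Du‖ - log‖Dw‖| < K for all unit vectors u, w within distance r of v (in the projective metric). Then log‖Dv‖ ≥ log‖D‖ + log((1/2)·sin r) - K. -/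
open scoped RealInnerProductSpace

/-- The standard metric on the projective space, expressed on unit vectors:
the angle between the lines spanned by `u` and `w`. -/
noncomputable def projDist {k : ℕ} (u w : EuclideanSpace ℝ (Fin k)) : ℝ :=
  Real.arccos |⟪u, w⟫|

set_option maxHeartbeats 1600000 in
/-- Supporting lemma for diagonal matrices: if `γ = log‖D·‖` oscillates by less than `K`
on a projective ball of radius `r` around the unit vector `v`, then
`log‖Dv‖ ≥ log‖D‖ + log((1/2)·sin r) - K`. -/
theorem diagonal_log_norm_lower_bound
    {k : ℕ} (D : EuclideanSpace ℝ (Fin k) →L[ℝ] EuclideanSpace ℝ (Fin k))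
    (hinj : Function.Injective D)
    (hdiag : ∀ i : Fin k, ∃ d : ℝ,
      D (EuclideanSpace.single i (1 : ℝ)) = d • EuclideanSpace.single i (1 : ℝ))
    (i₀ : Fin k) (e : EuclideanSpace ℝ (Fin k))
    (he : e = EuclideanSpace.single i₀ (1 : ℝ))
    (heig : ‖D e‖ = ‖D‖)
    (v : EuclideanSpace ℝ (Fin k)) (hv : ‖v‖ = 1)
    (r K : ℝ) (hr : 0 < r) (hK : 0 < K)
    (hosc : ∀ u w : EuclideanSpace ℝ (Fin k), ‖u‖ = 1 → ‖w‖ = 1 →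
      projDist v u ≤ r → projDist v w ≤ r →
      |Real.log ‖D u‖ - Real.log ‖D w‖| < K) :
    Real.log ‖D v‖ ≥ Real.log ‖D‖ + Real.log ((1 / 2) * Real.sin r) - K := by
  choose dd hdd using hdiag
  set d : ℝ := dd i₀ with hd_def
  have he1 : ‖e‖ = 1 := by rw [he, EuclideanSpace.norm_single]; norm_num
  have hDe : D e = d • e := by rw [he]; exact hdd i₀
  have hnormD : ‖D‖ = |d| := by
    rw [← heig, hDe, norm_smul, he1, Real.norm_eq_abs, mul_one]
  have hd0 : d ≠ 0 := by
    intro h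
    have : D e = D 0 := by rw [hDe, h, zero_smul, map_zero]
    have := hinj this
    rw [this, norm_zero] at he1; norm_num at he1
  have hDpos : (0:ℝ) < ‖D‖ := by rw [hnormD]; exact abs_pos.mpr hd0
  -- coordinate formula
  have hcoord : ∀ w : EuclideanSpace ℝ (Fin k), (D w) i₀ = d * w i₀ := by
    intro w
    have hw : w = ∑ i, w i • EuclideanSpace.single i (1:ℝ) := by
      have := (EuclideanSpace.basisFun (Fin k) ℝ).sum_repr w
      simp only [EuclideanSpace.basisFun_apply, EuclideanSpace.basisFun_repr] at this
      exact this.symm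
    conv_lhs => rw [hw]
    rw [map_sum]
    simp only [map_smul, hdd]
    have h2 := map_sum (PiLp.proj (𝕜 := ℝ) 2 (fun _ : Fin k => ℝ) i₀)
      (fun x : Fin k => w x • dd x • EuclideanSpace.single x (1:ℝ)) Finset.univ
    simp only [PiLp.proj_apply] at h2
    rw [h2]
    simp [EuclideanSpace.single_apply]
    ring
  -- key lower bound
  have key : ∀ w : EuclideanSpace ℝ (Fin k), ‖D‖ * |w i₀| ≤ ‖D w‖ := by
    intro w
    have h1 : |(D w) i₀| ≤ ‖D w‖ := by
      have := abs_real_inner_le_norm e (D w)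
      rw [he1, one_mul, he, real_inner_comm, EuclideanSpace.inner_single_right] at this
      simpa using this
    calc ‖D‖ * |w i₀| = |d * w i₀| := by rw [hnormD, abs_mul]
      _ = |(D w) i₀| := by rw [hcoord]
      _ ≤ ‖D w‖ := h1
  have hself : projDist v v ≤ r := by
    unfold projDist
    rw [real_inner_self_eq_norm_sq, hv]
    norm_num [Real.arccos_one]
    exact le_of_lt hr
  have hDv_pos : (0:ℝ) < ‖D v‖ := by
    rw [norm_pos_iff]
    intro h
    have : D v = D 0 := by rw [h, map_zero]
    have := hinj this
    rw [this, norm_zero] at hv; norm_num at hv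
  -- a generic step: from a good test vector w, conclude
  have step : ∀ w : EuclideanSpace ℝ (Fin k), ‖w‖ = 1 → projDist v w ≤ r →
      Real.log ‖D‖ + Real.log ((1/2) * Real.sin r) ≤ Real.log ‖D w‖ →
      Real.log ‖D v‖ ≥ Real.log ‖D‖ + Real.log ((1 / 2) * Real.sin r) - K := by
    intro w hw1 hwr hlog
    have h := hosc v w hv hw1 hself hwr
    have h2 : Real.log ‖D w‖ - Real.log ‖D v‖ < K := by
      have := abs_lt.mp h
      linarith [this.1]
    linarith
  by_cases hrbig : Real.pi / 2 ≤ r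
  · -- use w = e
    have hve : projDist v e ≤ r := by
      refine le_trans ?_ hrbig
      exact Real.arccos_le_pi_div_two.mpr (abs_nonneg _)
    have h := hosc v e hv he1 hself hve
    have h2 : Real.log ‖D e‖ - Real.log ‖D v‖ < K := by
      have := abs_lt.mp h; linarith [this.1]
    have hlog_nonpos : Real.log ((1/2) * Real.sin r) ≤ 0 := by
      rw [← Real.log_abs]
      apply Real.log_nonpos (abs_nonneg _)
      rw [abs_mul]
      have := abs_le.mpr ⟨Real.neg_one_le_sin r, Real.sin_le_one r⟩
      calc |(1:ℝ)/2| * |Real.sin r| ≤ (1/2) * 1 := by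
            rw [abs_of_pos (by norm_num : (0:ℝ) < 1/2)]
            exact mul_le_mul_of_nonneg_left this (by norm_num)
        _ ≤ 1 := by norm_num
    rw [heig] at h2
    linarith
  · push_neg at hrbig
    have hsinpos : 0 < Real.sin r := Real.sin_pos_of_pos_of_lt_pi hr
      (lt_trans hrbig (by linarith [Real.pi_pos]))
    have hsin1 : Real.sin r ≤ 1 := Real.sin_le_one r
    set c : ℝ := v i₀ with hc_def
    have hlogmul : Real.log (‖D‖ * ((1/2) * Real.sin r))
        = Real.log ‖D‖ + Real.log ((1/2) * Real.sin r) :=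
      Real.log_mul (ne_of_gt hDpos) (by positivity)
    by_cases hcase : (1/2) * Real.sin r ≤ |c|
    · -- v itself works
      have h1 : ‖D‖ * ((1/2) * Real.sin r) ≤ ‖D v‖ :=
        le_trans (mul_le_mul_of_nonneg_left hcase (le_of_lt hDpos)) (key v)
      have h2 : Real.log (‖D‖ * ((1/2) * Real.sin r)) ≤ Real.log ‖D v‖ :=
        Real.log_le_log (by positivity) h1
      rw [hlogmul] at h2
      linarith
    · push_neg at hcase
      have hc_lt : |c| < 1/2 := lt_of_lt_of_le hcase (by nlinarith)
      have hc2 : c^2 < 1 := by nlinarith [abs_nonneg c, sq_abs c]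
      have hvi : ⟪v, e⟫ = c := by
        rw [he, EuclideanSpace.inner_single_right]; simp [hc_def]
      have hev : ⟪e, v⟫ = c := by rw [real_inner_comm]; exact hvi
      have hvv : ⟪v, v⟫ = 1 := by rw [real_inner_self_eq_norm_sq, hv]; norm_num
      have hee : ⟪e, e⟫ = 1 := by rw [real_inner_self_eq_norm_sq, he1]; norm_num
      set q : ℝ := Real.sqrt (1 - c^2) with hq_def
      have hqpos : 0 < q := Real.sqrt_pos.mpr (by linarith)
      have hq2 : q^2 = 1 - c^2 := Real.sq_sqrt (by linarith)
      set u : EuclideanSpace ℝ (Fin k) := q⁻¹ • (e - c • v) with hu_def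
      have hnu2 : ‖e - c • v‖^2 = 1 - c^2 := by
        rw [norm_sub_sq_real, real_inner_smul_right, hev, norm_smul, he1, hv,
          Real.norm_eq_abs, mul_one, sq_abs, one_pow]
        ring
      have hnu : ‖u‖ = 1 := by
        rw [hu_def, norm_smul, Real.norm_eq_abs, abs_of_pos (inv_pos.mpr hqpos)]
        have h : ‖e - c • v‖ = q := by
          rw [hq_def]
          rw [← Real.sqrt_sq (norm_nonneg (e - c • v)), hnu2]
        rw [h, inv_mul_cancel₀ (ne_of_gt hqpos)]
      have hvu : ⟪v, u⟫ = 0 := by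
        rw [hu_def, inner_smul_right, inner_sub_right, inner_smul_right, hvi, hvv]
        ring
      have hui : u i₀ = q := by
        have h1 : (e - c • v) i₀ = 1 - c * c := by
          rw [PiLp.sub_apply, PiLp.smul_apply, he, EuclideanSpace.single_apply]
          simp [smul_eq_mul, hc_def]
        rw [hu_def, PiLp.smul_apply, h1, smul_eq_mul]
        have : 1 - c * c = q * q := by nlinarith
        rw [this, ← mul_assoc, inv_mul_cancel₀ (ne_of_gt hqpos), one_mul]
      set s : ℝ := if 0 ≤ c then 1 else -1 with hs_def
      have hs2 : s * s = 1 := by rw [hs_def]; split <;> norm_num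
      have hsc : s * c = |c| := by
        rw [hs_def]; split
        · rw [one_mul, abs_of_nonneg (by assumption)]
        · rw [neg_one_mul, abs_of_neg (by linarith [lt_of_not_ge (by assumption)])]
      set w : EuclideanSpace ℝ (Fin k) := Real.cos r • v + (s * Real.sin r) • u with hw_def
      have hcospos : 0 < Real.cos r := Real.cos_pos_of_mem_Ioo
        ⟨by linarith [Real.pi_pos], hrbig⟩
      have hvw : ⟪v, w⟫ = Real.cos r := by
        rw [hw_def, inner_add_right, inner_smul_right, inner_smul_right, hvv, hvu]
        ring
      have hnw : ‖w‖ = 1 := by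
        have h2 : ‖w‖^2 = 1 := by
          rw [hw_def, norm_add_sq_real, inner_smul_left, inner_smul_right, hvu,
            norm_smul, norm_smul, hv, hnu, Real.norm_eq_abs, Real.norm_eq_abs]
          have h3 : |s * Real.sin r| = Real.sin r := by
            rw [abs_mul]
            have : |s| = 1 := by rw [hs_def]; split <;> norm_num
            rw [this, one_mul, abs_of_pos hsinpos]
          rw [h3, abs_of_pos hcospos]
          ring_nf
          nlinarith [Real.sin_sq_add_cos_sq r]
        nlinarith [norm_nonneg w]
      have hwproj : projDist v w ≤ r := by
        unfold projDist
        rw [hvw, abs_of_pos hcospos, Real.arccos_cos (le_of_lt hr)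
          (by linarith [Real.pi_pos])]
      have hwi : w i₀ = Real.cos r * c + s * Real.sin r * q := by
        rw [hw_def, PiLp.add_apply, PiLp.smul_apply, PiLp.smul_apply, hui,
          smul_eq_mul, smul_eq_mul, hc_def]
      have hqhalf : (1:ℝ)/2 ≤ q := by
        rw [hq_def]
        have : (1:ℝ)/2 = Real.sqrt (1/4) := by
          rw [show (1:ℝ)/4 = (1/2)^2 by norm_num, Real.sqrt_sq (by norm_num)]
        rw [this]
        apply Real.sqrt_le_sqrt
        nlinarith [sq_abs c, abs_nonneg c]
      have hwabs : (1/2) * Real.sin r ≤ |w i₀| := by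
        have h1 : s * w i₀ = Real.cos r * |c| + Real.sin r * q := by
          rw [hwi]; rw [mul_add]
          rw [show s * (Real.cos r * c) = Real.cos r * (s * c) by ring, hsc]
          rw [show s * (s * Real.sin r * q) = (s * s) * (Real.sin r * q) by ring, hs2]
          ring
        have h2 : (1/2) * Real.sin r ≤ s * w i₀ := by
          rw [h1]
          have : Real.sin r * (1/2) ≤ Real.sin r * q :=
            mul_le_mul_of_nonneg_left hqhalf (le_of_lt hsinpos)
          nlinarith [abs_nonneg c]
        calc (1/2) * Real.sin r ≤ s * w i₀ := h2
          _ ≤ |s * w i₀| := le_abs_self _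
          _ = |w i₀| := by rw [abs_mul]
                           have : |s| = 1 := by rw [hs_def]; split <;> norm_num
                           rw [this, one_mul]
      apply step w hnw hwproj
      have h1 : ‖D‖ * ((1/2) * Real.sin r) ≤ ‖D w‖ :=
        le_trans (mul_le_mul_of_nonneg_left hwabs (le_of_lt hDpos)) (key w)
      have h2 : Real.log (‖D‖ * ((1/2) * Real.sin r)) ≤ Real.log ‖D w‖ :=
        Real.log_le_log (by positivity) h1
      rw [hlogmul] at h2
      exact h2
end

section
/- Let A ∈ GL(k,ℝ) and r, K > 0. Suppose v ∈ ℙℝ^k satisfies |γ(v) - γ(w)| < K for all w in the ball B(v,r) of the projective space, where γ(u) = log(‖Au‖/‖u‖). Then there is a constant ρ depending only on K and r (not on A) such that γ(v) ≥ log‖A‖ - ρ. -/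
open scoped RealInnerProductSpace

private lemma norm_combo {k : ℕ} (v p : EuclideanSpace ℝ (Fin k))
    (hv : ‖v‖ = 1) (hp : ‖p‖ = 1) (hvp : ⟪v, p⟫ = 0) (c s : ℝ)
    (h : c ^ 2 + s ^ 2 = 1) : ‖c • v + s • p‖ = 1 := by
  have h1 : ⟪c • v, s • p⟫ = (0:ℝ) := by
    rw [real_inner_smul_left, real_inner_smul_right, hvp]; ring
  have h2 : ‖c • v + s • p‖ ^ 2 = 1 := by
    rw [norm_add_sq_real, h1, norm_smul, norm_smul, hv, hp]
    simp only [mul_one, Real.norm_eq_abs, mul_zero, add_zero]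
    nlinarith [sq_abs c, sq_abs s]
  calc ‖c • v + s • p‖ = Real.sqrt (‖c • v + s • p‖ ^ 2) :=
        (Real.sqrt_sq (norm_nonneg _)).symm
    _ = 1 := by rw [h2]; exact Real.sqrt_one

/-- Decomposition of a unit vector `u` relative to a unit vector `v`. -/
private lemma unit_decomp {k : ℕ} (v u : EuclideanSpace ℝ (Fin k))
    (hv : ‖v‖ = 1) (hu : ‖u‖ = 1) :
    (∃ a : ℝ, |a| = 1 ∧ u = a • v) ∨
    (∃ (a b : ℝ) (p : EuclideanSpace ℝ (Fin k)), ‖p‖ = 1 ∧ ⟪v, p⟫ = 0 ∧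
      u = a • v + b • p ∧ a ^ 2 + b ^ 2 = 1 ∧ 0 < b) := by
  have hvv : ⟪v, v⟫ = (1:ℝ) := by
    rw [real_inner_self_eq_norm_sq, hv]; norm_num
  by_cases hz0 : u - ⟪v, u⟫ • v = 0
  · left
    refine ⟨⟪v, u⟫, ?_, by linear_combination (norm := module) hz0⟩
    have hu_eq : u = ⟪v, u⟫ • v := by linear_combination (norm := module) hz0
    have h1 : |⟪v, u⟫| * ‖v‖ = ‖u‖ := by
      rw [← Real.norm_eq_abs, ← norm_smul, ← hu_eq]
    rw [hv, mul_one, hu] at h1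
    exact h1
  · right
    set z : EuclideanSpace ℝ (Fin k) := u - ⟪v, u⟫ • v with hz_def
    have hb0 : 0 < ‖z‖ := norm_pos_iff.mpr hz0
    have hvz : ⟪v, z⟫ = 0 := by
      have : ⟪v, z⟫ = ⟪v, u⟫ - ⟪v, u⟫ * ⟪v, v⟫ := by
        rw [hz_def, inner_sub_right]
        congr 1
        exact real_inner_smul_right v v ⟪v, u⟫
      rw [this, hvv]; ring
    refine ⟨⟪v, u⟫, ‖z‖, ‖z‖⁻¹ • z, ?_, ?_, ?_, ?_, hb0⟩
    · rw [norm_smul, norm_inv, norm_norm, inv_mul_cancel₀ (ne_of_gt hb0)]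
    · rw [real_inner_smul_right, hvz]; ring
    · rw [smul_smul, mul_inv_cancel₀ (ne_of_gt hb0), one_smul, hz_def]; module
    · have h1 : ⟪⟪v, u⟫ • v, z⟫ = (0:ℝ) := by
        rw [real_inner_smul_left, hvz]; ring
      have h2 : ‖⟪v, u⟫ • v + z‖ ^ 2 = ⟪v, u⟫ ^ 2 + ‖z‖ ^ 2 := by
        rw [norm_add_sq_real, h1, norm_smul, hv]
        simp only [mul_one, Real.norm_eq_abs, mul_zero, add_zero]
        nlinarith [sq_abs ⟪v, u⟫]
      have h3 : ⟪v, u⟫ • v + z = u := by rw [hz_def]; module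
      rw [h3, hu] at h2
      simpa using h2.symm

set_option maxHeartbeats 800000 in
set_option synthInstance.maxHeartbeats 400000 in
/-- If `γ(u) = log(‖Au‖/‖u‖)` oscillates by less than `K` on a projective ball of
radius `r` around `v`, then `γ(v) ≥ log‖A‖ - ρ(K,r)` for a constant `ρ(K,r)`
independent of the invertible map `A`. -/
theorem log_norm_lower_bound_of_osc
    {k : ℕ} (K r : ℝ) (hK : 0 < K) (hr : 0 < r) :
    ∃ ρ : ℝ, ∀ A : EuclideanSpace ℝ (Fin k) →L[ℝ] EuclideanSpace ℝ (Fin k),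
      Function.Injective A → Function.Surjective A →
      ∀ v : EuclideanSpace ℝ (Fin k), ‖v‖ = 1 →
      (∀ w : EuclideanSpace ℝ (Fin k), ‖w‖ = 1 → projDist v w ≤ r →
        |Real.log ‖A v‖ - Real.log ‖A w‖| < K) →
      Real.log ‖A v‖ ≥ Real.log ‖A‖ - ρ := by
  have hπ := Real.pi_pos
  set t := min r (Real.pi / 2) with ht_def
  have ht0 : 0 < t := lt_min hr (by linarith)
  have htπ : t ≤ Real.pi / 2 := min_le_right _ _
  have htr : t ≤ r := min_le_left _ _
  have hst : 0 < Real.sin t := Real.sin_pos_of_pos_of_lt_pi ht0 (by linarith)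
  have hst1 : Real.sin t ≤ 1 := Real.sin_le_one t
  have hlogsin : Real.log (Real.sin t) ≤ 0 := Real.log_nonpos (le_of_lt hst) hst1
  have hlog4 : Real.log 4 ≤ 2 := by
    have h2 : Real.log 2 ≤ 1 := by
      have := Real.log_le_sub_one_of_pos (by norm_num : (0:ℝ) < 2)
      linarith
    have h4 : (4:ℝ) = 2 ^ 2 := by norm_num
    rw [h4, Real.log_pow]
    push_cast; linarith
  refine ⟨K + 2 - Real.log (Real.sin t), ?_⟩
  intro A hinj _ v hv h
  have hv0 : v ≠ 0 := by intro h0; rw [h0] at hv; simp at hv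
  have hAv : 0 < ‖A v‖ := by
    rw [norm_pos_iff]
    intro h0
    exact hv0 (hinj (by simpa using h0))
  have hA : 0 < ‖A‖ := by
    have := A.le_opNorm v
    rw [hv, mul_one] at this
    linarith
  -- pick a unit vector u with ‖A u‖ > ‖A‖/2
  obtain ⟨u, hu, hAu⟩ : ∃ u : EuclideanSpace ℝ (Fin k), ‖u‖ = 1 ∧ ‖A‖ / 2 < ‖A u‖ := by
    obtain ⟨x, hx1, hx2⟩ := A.exists_lt_apply_of_lt_opNorm (show ‖A‖ / 2 < ‖A‖ by linarith)
    have hx0 : x ≠ 0 := by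
      intro h0; rw [h0] at hx2; simp at hx2; linarith
    have hxn : 0 < ‖x‖ := norm_pos_iff.mpr hx0
    refine ⟨‖x‖⁻¹ • x, ?_, ?_⟩
    · rw [norm_smul, norm_inv, norm_norm, inv_mul_cancel₀ (ne_of_gt hxn)]
    · have heq : ‖A (‖x‖⁻¹ • x)‖ = ‖x‖⁻¹ * ‖A x‖ := by
        rw [map_smul, norm_smul, norm_inv, norm_norm]
      have h1 : 1 ≤ ‖x‖⁻¹ := (one_le_inv₀ hxn).mpr (le_of_lt hx1)
      nlinarith [norm_nonneg (A x)]
  -- main dichotomy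
  have key : ‖A‖ / 4 ≤ ‖A v‖ ∨
      ∃ w : EuclideanSpace ℝ (Fin k), ‖w‖ = 1 ∧ projDist v w ≤ r ∧
        Real.sin t * (‖A‖ / 4) ≤ ‖A w‖ := by
    rcases unit_decomp v u hv hu with ⟨a, ha, hu_eq⟩ | ⟨a, b, p, hp, hvp, hu_eq, hab, hb0⟩
    · left
      have : ‖A u‖ = |a| * ‖A v‖ := by
        rw [hu_eq, map_smul, norm_smul, Real.norm_eq_abs]
      rw [this, ha, one_mul] at hAu
      linarith
    · have ha1 : |a| ≤ 1 := by nlinarith [sq_abs a, sq_nonneg b]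
      have hb1 : b ≤ 1 := by nlinarith
      have hAu_le : ‖A u‖ ≤ ‖A v‖ + ‖A p‖ := by
        have hle : ‖A u‖ ≤ |a| * ‖A v‖ + |b| * ‖A p‖ := by
          rw [hu_eq, map_add, map_smul, map_smul]
          calc ‖a • A v + b • A p‖ ≤ ‖a • A v‖ + ‖b • A p‖ := norm_add_le _ _
            _ = |a| * ‖A v‖ + |b| * ‖A p‖ := by
                rw [norm_smul, norm_smul, Real.norm_eq_abs, Real.norm_eq_abs]
        have hba : |b| = b := abs_of_pos hb0
        nlinarith [norm_nonneg (A v), norm_nonneg (A p)]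
      by_cases hcase : ‖A‖ / 4 ≤ ‖A v‖
      · exact Or.inl hcase
      · right
        push_neg at hcase
        have hAp : ‖A‖ / 4 ≤ ‖A p‖ := by linarith
        have hcs : Real.cos t ^ 2 + Real.sin t ^ 2 = 1 := by
          rw [add_comm]; exact Real.sin_sq_add_cos_sq t
        have hnw₁ : ‖Real.cos t • v + Real.sin t • p‖ = 1 :=
          norm_combo v p hv hp hvp _ _ hcs
        have hnw₂ : ‖Real.cos t • v + (-Real.sin t) • p‖ = 1 :=
          norm_combo v p hv hp hvp _ _ (by nlinarith)
        have hcos0 : 0 ≤ Real.cos t :=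
          Real.cos_nonneg_of_mem_Icc ⟨by linarith, htπ⟩
        have hpd : ∀ s : ℝ, projDist v (Real.cos t • v + s • p) ≤ r := by
          intro s
          have hinner : ⟪v, Real.cos t • v + s • p⟫ = Real.cos t := by
            rw [inner_add_right, real_inner_smul_right, real_inner_smul_right, hvp,
              real_inner_self_eq_norm_sq, hv]
            ring
          rw [projDist, hinner, abs_of_nonneg hcos0,
            Real.arccos_cos (le_of_lt ht0) (by linarith)]
          exact htr
        have hsub : A (Real.cos t • v + Real.sin t • p)
            - A (Real.cos t • v + (-Real.sin t) • p) = (2 * Real.sin t) • A p := by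
          simp only [map_add, map_smul]
          module
        have hsum : 2 * Real.sin t * ‖A p‖ ≤
            ‖A (Real.cos t • v + Real.sin t • p)‖
              + ‖A (Real.cos t • v + (-Real.sin t) • p)‖ := by
          have h1 : ‖A (Real.cos t • v + Real.sin t • p)
              - A (Real.cos t • v + (-Real.sin t) • p)‖ = 2 * Real.sin t * ‖A p‖ := by
            rw [hsub, norm_smul, Real.norm_eq_abs, abs_of_pos (by linarith)]
          have h2 := norm_sub_le (A (Real.cos t • v + Real.sin t • p))
            (A (Real.cos t • v + (-Real.sin t) • p))
          linarith
        rcases le_total ‖A (Real.cos t • v + (-Real.sin t) • p)‖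
            ‖A (Real.cos t • v + Real.sin t • p)‖ with hle | hle
        · refine ⟨_, hnw₁, hpd _, ?_⟩
          nlinarith
        · refine ⟨_, hnw₂, hpd _, ?_⟩
          nlinarith
  rcases key with hcase | ⟨w, hw1, hw2, hw3⟩
  · have h1 : Real.log (‖A‖ / 4) ≤ Real.log ‖A v‖ :=
      Real.log_le_log (by positivity) hcase
    rw [Real.log_div (ne_of_gt hA) (by norm_num)] at h1
    linarith
  · have hAw : 0 < ‖A w‖ := lt_of_lt_of_le (by positivity) hw3
    have h1 : Real.log (Real.sin t * (‖A‖ / 4)) ≤ Real.log ‖A w‖ :=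
      Real.log_le_log (by positivity) hw3
    rw [Real.log_mul (ne_of_gt hst) (by positivity),
      Real.log_div (ne_of_gt hA) (by norm_num)] at h1
    have h2 := h w hw1 hw2
    rw [abs_lt] at h2
    linarith [h2.1]
end

section
/- Let T : Σ → Σ be a subshift and A : Σ → GL(k,ℝ) continuous. Suppose A is quasi-multiplicative: there exist C > 0 and m ∈ ℕ such that for all admissible words I, J there is an admissible word K with |K| ≤ m, IKJ admissible, and ‖A(IKJ)‖ ≥ C‖A(I)‖‖A(J)‖, where ‖A(I)‖ = max_{x∈[I]}‖A^{|I|}(x)‖. Then for every t > 0, the sequence a_n := log Σ_{I∈L(n)} ‖A(I)‖^t satisfies: the limit lim_n a_n/n exists and equals inf over n of (a_{n+m'}+c)/n for suitable constants, i.e., (1/n)·log Σ_{I∈L(n)} ‖A(I)‖^t converges. -/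
open Filter
open scoped Classical

/-- The left shift on the two-sided full shift. -/
def shiftMap {q : ℕ} (x : ℤ → Fin q) : ℤ → Fin q := fun i => x (i + 1)

/-- The matrix cocycle product `A^n(x) = A(T^{n-1}x)⋯A(Tx)A(x)` over the shift. -/
noncomputable def shiftCocycle {q k : ℕ}
    (A : (ℤ → Fin q) → (EuclideanSpace ℝ (Fin k) →L[ℝ] EuclideanSpace ℝ (Fin k))) :
    ℕ → (ℤ → Fin q) → (EuclideanSpace ℝ (Fin k) →L[ℝ] EuclideanSpace ℝ (Fin k))
  | 0, _ => 1
  | n + 1, x => shiftCocycle A n (shiftMap x) ∘L A x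

/-- The cylinder `[I] ⊆ Σ` of a word `I` of length `n`. -/
def cylinder {q : ℕ} (Sig : Set (ℤ → Fin q)) {n : ℕ} (I : Fin n → Fin q) :
    Set (ℤ → Fin q) :=
  {x ∈ Sig | ∀ i : Fin n, x ((i : ℕ) : ℤ) = I i}

/-- A word is admissible if its cylinder in `Σ` is nonempty. -/
def Admissible {q : ℕ} (Sig : Set (ℤ → Fin q)) {n : ℕ} (I : Fin n → Fin q) : Prop :=
  (cylinder Sig I).Nonempty

/-- `‖A(I)‖ = max_{x ∈ [I]} ‖A^{|I|}(x)‖`. -/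
noncomputable def wordNorm {q k : ℕ} (Sig : Set (ℤ → Fin q))
    (A : (ℤ → Fin q) → (EuclideanSpace ℝ (Fin k) →L[ℝ] EuclideanSpace ℝ (Fin k)))
    {n : ℕ} (I : Fin n → Fin q) : ℝ :=
  sSup ((fun x => ‖shiftCocycle A n x‖) '' cylinder Sig I)

section Aux

variable {q k : ℕ} {Q : Fin q → Fin q → Prop} {Sig : Set (ℤ → Fin q)}
  {A : (ℤ → Fin q) → (EuclideanSpace ℝ (Fin k) →L[ℝ] EuclideanSpace ℝ (Fin k))}

lemma shiftMap_iter (n : ℕ) (x : ℤ → Fin q) (i : ℤ) : shiftMap^[n] x i = x (i + n) := by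
  induction n generalizing x i with
  | zero => simp
  | succ n ih =>
    rw [Function.iterate_succ_apply, ih]
    show x (i + n + 1) = x (i + (n + 1))
    congr 1
    push_cast
    ring

lemma shiftCocycle_succ (n : ℕ) (x : ℤ → Fin q) :
    shiftCocycle A (n + 1) x = (shiftCocycle A n (shiftMap x)).comp (A x) := rfl

lemma shiftCocycle_add (n m : ℕ) (x : ℤ → Fin q) :
    shiftCocycle A (n + m) x = (shiftCocycle A m (shiftMap^[n] x)).comp (shiftCocycle A n x) := by
  induction n generalizing x with
  | zero =>
    rw [Nat.zero_add]
    ext v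
    simp [shiftCocycle]
  | succ n ih =>
    rw [show n + 1 + m = (n + m) + 1 from by omega, shiftCocycle_succ, ih,
      shiftCocycle_succ, Function.iterate_succ_apply]
    ext v
    simp

lemma sig_shift (hSFT : Sig = {x | ∀ i : ℤ, Q (x i) (x (i + 1))}) {x : ℤ → Fin q}
    (hx : x ∈ Sig) : shiftMap x ∈ Sig := by
  subst hSFT
  intro i
  exact hx (i + 1)

lemma sig_shift_iter (hSFT : Sig = {x | ∀ i : ℤ, Q (x i) (x (i + 1))}) (n : ℕ) {x : ℤ → Fin q}
    (hx : x ∈ Sig) : shiftMap^[n] x ∈ Sig := by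
  induction n with
  | zero => exact hx
  | succ n ih => rw [Function.iterate_succ_apply']; exact sig_shift hSFT ih

lemma cyl_compact (hSFT : Sig = {x | ∀ i : ℤ, Q (x i) (x (i + 1))}) {n : ℕ}
    (I : Fin n → Fin q) : IsCompact (cylinder Sig I) := by
  have hSig : IsClosed Sig := by
    subst hSFT
    have : {x : ℤ → Fin q | ∀ i : ℤ, Q (x i) (x (i + 1))} =
        ⋂ i : ℤ, (fun x : ℤ → Fin q => (x i, x (i + 1))) ⁻¹' {p | Q p.1 p.2} := by
      ext x; simp [Set.mem_iInter]
    rw [this]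
    exact isClosed_iInter fun i =>
      (isClosed_discrete _).preimage ((continuous_apply i).prodMk (continuous_apply (i + 1)))
  have hcyl : IsClosed (cylinder Sig I) := by
    have : cylinder Sig I = Sig ∩ ⋂ i : Fin n, (fun x : ℤ → Fin q => x ((i : ℕ) : ℤ)) ⁻¹' {I i} := by
      ext x; simp [cylinder, Set.mem_iInter]
    rw [this]
    exact hSig.inter (isClosed_iInter fun i =>
      (isClosed_discrete _).preimage (continuous_apply _))
  exact hcyl.isCompact

lemma cocycle_cont (hA : Continuous A) (n : ℕ) :
    Continuous fun x => shiftCocycle A n x := by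
  induction n with
  | zero => exact continuous_const
  | succ n ih =>
    have hs : Continuous (shiftMap (q := q)) :=
      continuous_pi fun i => continuous_apply (i + 1)
    exact (ih.comp hs).clm_comp hA

lemma wordNorm_mem (hSFT : Sig = {x | ∀ i : ℤ, Q (x i) (x (i + 1))}) (hA : Continuous A)
    {n : ℕ} {I : Fin n → Fin q} (hI : Admissible Sig I) :
    wordNorm Sig A I ∈ (fun x => ‖shiftCocycle A n x‖) '' cylinder Sig I := by
  have hc : IsCompact ((fun x => ‖shiftCocycle A n x‖) '' cylinder Sig I) :=
    (cyl_compact hSFT I).image (cocycle_cont hA n).norm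
  exact hc.sSup_mem (hI.image _)

lemma le_wordNorm (hSFT : Sig = {x | ∀ i : ℤ, Q (x i) (x (i + 1))}) (hA : Continuous A)
    {n : ℕ} {I : Fin n → Fin q} {x : ℤ → Fin q} (hx : x ∈ cylinder Sig I) :
    ‖shiftCocycle A n x‖ ≤ wordNorm Sig A I := by
  have hc : IsCompact ((fun x => ‖shiftCocycle A n x‖) '' cylinder Sig I) :=
    (cyl_compact hSFT I).image (cocycle_cont hA n).norm
  exact le_csSup hc.bddAbove ⟨x, hx, rfl⟩

lemma wordNorm_nonneg (hSFT : Sig = {x | ∀ i : ℤ, Q (x i) (x (i + 1))}) (hA : Continuous A)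
    {n : ℕ} (I : Fin n → Fin q) : 0 ≤ wordNorm Sig A I := by
  by_cases hI : Admissible Sig I
  · obtain ⟨x, -, hx⟩ := wordNorm_mem hSFT hA hI
    rw [← hx]
    exact norm_nonneg _
  · rw [Admissible, Set.not_nonempty_iff_eq_empty] at hI
    rw [wordNorm, hI, Set.image_empty, Real.sSup_empty]

end Aux

section Aux2
variable {q k : ℕ} {Q : Fin q → Fin q → Prop} {Sig : Set (ℤ → Fin q)}
  {A : (ℤ → Fin q) → (EuclideanSpace ℝ (Fin k) →L[ℝ] EuclideanSpace ℝ (Fin k))}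

lemma cyl_append_left {n m : ℕ} {I : Fin n → Fin q} {J : Fin m → Fin q} {x : ℤ → Fin q}
    (hx : x ∈ cylinder Sig (Fin.append I J)) : x ∈ cylinder Sig I := by
  refine ⟨hx.1, fun i => ?_⟩
  have h := hx.2 (Fin.castAdd m i)
  rwa [Fin.append_left, Fin.coe_castAdd] at h

lemma cyl_append_right (hSFT : Sig = {x | ∀ i : ℤ, Q (x i) (x (i + 1))})
    {n m : ℕ} {I : Fin n → Fin q} {J : Fin m → Fin q} {x : ℤ → Fin q}
    (hx : x ∈ cylinder Sig (Fin.append I J)) : shiftMap^[n] x ∈ cylinder Sig J := by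
  refine ⟨sig_shift_iter hSFT n hx.1, fun i => ?_⟩
  have h := hx.2 (Fin.natAdd n i)
  rw [Fin.append_right, Fin.coe_natAdd] at h
  rw [shiftMap_iter]
  rw [← h]
  congr 1
  push_cast
  ring

lemma admissible_append_split (hSFT : Sig = {x | ∀ i : ℤ, Q (x i) (x (i + 1))})
    {n m : ℕ} {I : Fin n → Fin q} {J : Fin m → Fin q}
    (h : Admissible Sig (Fin.append I J)) : Admissible Sig I ∧ Admissible Sig J := by
  obtain ⟨x, hx⟩ := h
  exact ⟨⟨x, cyl_append_left hx⟩, ⟨_, cyl_append_right hSFT hx⟩⟩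

lemma wordNorm_append_le (hSFT : Sig = {x | ∀ i : ℤ, Q (x i) (x (i + 1))}) (hA : Continuous A)
    {n m : ℕ} {I : Fin n → Fin q} {J : Fin m → Fin q}
    (hW : Admissible Sig (Fin.append I J)) :
    wordNorm Sig A (Fin.append I J) ≤ wordNorm Sig A I * wordNorm Sig A J := by
  obtain ⟨x, hx, hxw⟩ := wordNorm_mem hSFT hA hW
  rw [← hxw]
  simp only
  rw [shiftCocycle_add]
  calc ‖(shiftCocycle A m (shiftMap^[n] x)).comp (shiftCocycle A n x)‖
      ≤ ‖shiftCocycle A m (shiftMap^[n] x)‖ * ‖shiftCocycle A n x‖ :=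
        ContinuousLinearMap.opNorm_comp_le _ _
    _ ≤ wordNorm Sig A J * wordNorm Sig A I := by
        apply mul_le_mul (le_wordNorm hSFT hA (cyl_append_right hSFT hx))
          (le_wordNorm hSFT hA (cyl_append_left hx)) (norm_nonneg _)
          (wordNorm_nonneg hSFT hA J)
    _ = wordNorm Sig A I * wordNorm Sig A J := mul_comm _ _

lemma wordNorm_cast {a b : ℕ} (h : b = a) (W : Fin a → Fin q) :
    wordNorm Sig A (fun i : Fin b => W (Fin.cast h i)) = wordNorm Sig A W := by
  subst h
  rfl

lemma admissible_cast {a b : ℕ} (h : b = a) (W : Fin a → Fin q) :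
    Admissible Sig (fun i : Fin b => W (Fin.cast h i)) ↔ Admissible Sig W := by
  subst h
  rfl

def appendEquiv (q n m : ℕ) : ((Fin n → Fin q) × (Fin m → Fin q)) ≃ (Fin (n + m) → Fin q) where
  toFun p := Fin.append p.1 p.2
  invFun W := (fun i => W (Fin.castAdd m i), fun i => W (Fin.natAdd n i))
  left_inv p := by
    refine Prod.ext (funext fun i => ?_) (funext fun i => ?_)
    · exact Fin.append_left _ _ _
    · exact Fin.append_right _ _ _
  right_inv W := Fin.append_castAdd_natAdd

end Aux2

noncomputable def pSum {q k : ℕ} (Sig : Set (ℤ → Fin q))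
    (A : (ℤ → Fin q) → (EuclideanSpace ℝ (Fin k) →L[ℝ] EuclideanSpace ℝ (Fin k)))
    (t : ℝ) (n : ℕ) : ℝ :=
  ∑ I : Fin n → Fin q, if Admissible Sig I then wordNorm Sig A I ^ t else 0

section Aux3
variable {q k : ℕ} {Q : Fin q → Fin q → Prop} {Sig : Set (ℤ → Fin q)}
  {A : (ℤ → Fin q) → (EuclideanSpace ℝ (Fin k) →L[ℝ] EuclideanSpace ℝ (Fin k))} {t : ℝ}

lemma term_nonneg (hSFT : Sig = {x | ∀ i : ℤ, Q (x i) (x (i + 1))}) (hA : Continuous A)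
    {n : ℕ} (I : Fin n → Fin q) :
    0 ≤ if Admissible Sig I then wordNorm Sig A I ^ t else 0 := by
  split_ifs
  · exact Real.rpow_nonneg (wordNorm_nonneg hSFT hA I) t
  · exact le_rfl

lemma pSum_nonneg (hSFT : Sig = {x | ∀ i : ℤ, Q (x i) (x (i + 1))}) (hA : Continuous A)
    (n : ℕ) : 0 ≤ pSum Sig A t n :=
  Finset.sum_nonneg fun I _ => term_nonneg hSFT hA I

lemma pSum_submult (hSFT : Sig = {x | ∀ i : ℤ, Q (x i) (x (i + 1))}) (hA : Continuous A)
    (ht : 0 ≤ t) (n m : ℕ) :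
    pSum Sig A t (n + m) ≤ pSum Sig A t n * pSum Sig A t m := by
  classical
  have key : ∀ (I : Fin n → Fin q) (J : Fin m → Fin q),
      (if Admissible Sig (Fin.append I J) then wordNorm Sig A (Fin.append I J) ^ t else 0) ≤
      (if Admissible Sig I then wordNorm Sig A I ^ t else 0) *
        (if Admissible Sig J then wordNorm Sig A J ^ t else 0) := by
    intro I J
    by_cases hW : Admissible Sig (Fin.append I J)
    · obtain ⟨h1, h2⟩ := admissible_append_split hSFT hW
      rw [if_pos h1, if_pos h2, if_pos hW,
        ← Real.mul_rpow (wordNorm_nonneg hSFT hA I) (wordNorm_nonneg hSFT hA J)]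
      exact Real.rpow_le_rpow (wordNorm_nonneg hSFT hA _) (wordNorm_append_le hSFT hA hW) ht
    · rw [if_neg hW]
      exact mul_nonneg (term_nonneg hSFT hA I) (term_nonneg hSFT hA J)
  calc pSum Sig A t (n + m)
      = ∑ p : (Fin n → Fin q) × (Fin m → Fin q),
          (if Admissible Sig (Fin.append p.1 p.2)
            then wordNorm Sig A (Fin.append p.1 p.2) ^ t else 0) :=
        (Fintype.sum_equiv (appendEquiv q n m) _ _ (fun p => rfl)).symm
    _ ≤ ∑ p : (Fin n → Fin q) × (Fin m → Fin q),
          (if Admissible Sig p.1 then wordNorm Sig A p.1 ^ t else 0) *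
          (if Admissible Sig p.2 then wordNorm Sig A p.2 ^ t else 0) :=
        Finset.sum_le_sum fun p _ => key p.1 p.2
    _ = pSum Sig A t n * pSum Sig A t m := by
        rw [Fintype.sum_prod_type, pSum, pSum, Finset.sum_mul]
        exact Finset.sum_congr rfl fun I _ => by rw [Finset.mul_sum]

end Aux3

section Aux4
variable {q k : ℕ} {Q : Fin q → Fin q → Prop} {Sig : Set (ℤ → Fin q)}
  {A : (ℤ → Fin q) → (EuclideanSpace ℝ (Fin k) →L[ℝ] EuclideanSpace ℝ (Fin k))} {t : ℝ}

set_option maxHeartbeats 2000000 in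
lemma pSum_supermult (hSFT : Sig = {x | ∀ i : ℤ, Q (x i) (x (i + 1))}) (hA : Continuous A)
    {C : ℝ} (hC : 0 < C) {m₀ : ℕ}
    (hqm : ∀ (n₁ n₂ : ℕ) (I : Fin n₁ → Fin q) (J : Fin n₂ → Fin q),
        Admissible Sig I → Admissible Sig J →
        ∃ l ≤ m₀, ∃ Kw : Fin l → Fin q,
          Admissible Sig (Fin.append (Fin.append I Kw) J) ∧
          C * wordNorm Sig A I * wordNorm Sig A J ≤
            wordNorm Sig A (Fin.append (Fin.append I Kw) J))
    (ht : 0 ≤ t) (n m : ℕ) :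
    C ^ t * pSum Sig A t n * pSum Sig A t m ≤
      (∑ j ∈ Finset.range (m₀ + 1), pSum Sig A t j) * pSum Sig A t (n + m) := by
  classical
  set P : Finset ((Fin n → Fin q) × (Fin m → Fin q)) :=
    Finset.univ.filter (fun p => Admissible Sig p.1 ∧ Admissible Sig p.2) with hP
  -- choice of connecting words
  have H : ∀ p : (Fin n → Fin q) × (Fin m → Fin q), ∃ l, l ≤ m₀ ∧ ∃ Kw : Fin l → Fin q,
      ((Admissible Sig p.1 ∧ Admissible Sig p.2) →
        Admissible Sig (Fin.append (Fin.append p.1 Kw) p.2) ∧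
        C * wordNorm Sig A p.1 * wordNorm Sig A p.2 ≤
          wordNorm Sig A (Fin.append (Fin.append p.1 Kw) p.2)) := by
    intro p
    by_cases hp : Admissible Sig p.1 ∧ Admissible Sig p.2
    · obtain ⟨l, hl, Kw, h1, h2⟩ := hqm n m p.1 p.2 hp.1 hp.2
      exact ⟨l, hl, Kw, fun _ => ⟨h1, h2⟩⟩
    · exact ⟨0, Nat.zero_le _, Fin.elim0, fun hc => absurd hc hp⟩
  choose L hL Kw hKw using H
  -- Step A : rewrite LHS as a sum over admissible pairs
  have expand : C ^ t * pSum Sig A t n * pSum Sig A t m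
      = ∑ p : (Fin n → Fin q) × (Fin m → Fin q),
          C ^ t * (if Admissible Sig p.1 then wordNorm Sig A p.1 ^ t else 0) *
            (if Admissible Sig p.2 then wordNorm Sig A p.2 ^ t else 0) := by
    rw [pSum, pSum, Fintype.sum_prod_type, mul_assoc, Finset.sum_mul_sum, Finset.mul_sum]
    refine Finset.sum_congr rfl fun I _ => ?_
    rw [Finset.mul_sum]
    exact Finset.sum_congr rfl fun J _ => by ring
  have restrict : (∑ p : (Fin n → Fin q) × (Fin m → Fin q),
          C ^ t * (if Admissible Sig p.1 then wordNorm Sig A p.1 ^ t else 0) *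
            (if Admissible Sig p.2 then wordNorm Sig A p.2 ^ t else 0))
      = ∑ p ∈ P, C ^ t * (if Admissible Sig p.1 then wordNorm Sig A p.1 ^ t else 0) *
            (if Admissible Sig p.2 then wordNorm Sig A p.2 ^ t else 0) := by
    refine (Finset.sum_subset (Finset.filter_subset _ _) ?_).symm
    intro p _ hp
    have hnot : ¬ (Admissible Sig p.1 ∧ Admissible Sig p.2) := fun hc =>
      hp (Finset.mem_filter.2 ⟨Finset.mem_univ _, hc⟩)
    by_cases h1 : Admissible Sig p.1
    · have h2 : ¬ Admissible Sig p.2 := fun h2 => hnot ⟨h1, h2⟩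
      rw [if_neg h2, mul_zero]
    · rw [if_neg h1, mul_zero, zero_mul]
  have onP : ∀ p ∈ P,
      C ^ t * (if Admissible Sig p.1 then wordNorm Sig A p.1 ^ t else 0) *
        (if Admissible Sig p.2 then wordNorm Sig A p.2 ^ t else 0)
      = (C * wordNorm Sig A p.1 * wordNorm Sig A p.2) ^ t := by
    intro p hp
    obtain ⟨-, h1, h2⟩ := Finset.mem_filter.1 hp
    rw [if_pos h1, if_pos h2,
      Real.mul_rpow (mul_nonneg hC.le (wordNorm_nonneg hSFT hA _)) (wordNorm_nonneg hSFT hA _),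
      Real.mul_rpow hC.le (wordNorm_nonneg hSFT hA _)]
  -- Step B : bound by the glued words
  have stepB : (∑ p ∈ P, (C * wordNorm Sig A p.1 * wordNorm Sig A p.2) ^ t)
      ≤ ∑ p ∈ P, wordNorm Sig A (Fin.append (Fin.append p.1 (Kw p)) p.2) ^ t := by
    refine Finset.sum_le_sum fun p hp => ?_
    obtain ⟨-, hadm⟩ := Finset.mem_filter.1 hp
    obtain ⟨hadm', hle⟩ := hKw p hadm
    exact Real.rpow_le_rpow
      (mul_nonneg (mul_nonneg hC.le (wordNorm_nonneg hSFT hA _)) (wordNorm_nonneg hSFT hA _))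
      hle ht
  -- Step C : fiber the sum over the length of the connecting word
  have stepC : (∑ p ∈ P, wordNorm Sig A (Fin.append (Fin.append p.1 (Kw p)) p.2) ^ t)
      = ∑ j ∈ Finset.range (m₀ + 1), ∑ p ∈ P.filter (fun p => L p = j),
          wordNorm Sig A (Fin.append (Fin.append p.1 (Kw p)) p.2) ^ t :=
    (Finset.sum_fiberwise_of_maps_to
      (fun p _ => Finset.mem_range.2 (Nat.lt_succ_of_le (hL p))) _).symm
  -- Step D : each fiber is at most `pSum (n + j + m)`
  have stepD : ∀ j ∈ Finset.range (m₀ + 1),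
      (∑ p ∈ P.filter (fun p => L p = j),
          wordNorm Sig A (Fin.append (Fin.append p.1 (Kw p)) p.2) ^ t)
        ≤ pSum Sig A t (n + j + m) := by
    intro j _
    set Pj := P.filter (fun p => L p = j) with hPj
    have hcast : ∀ z : {p // p ∈ Pj}, n + j + m = n + L z.1 + m := by
      intro z
      have := (Finset.mem_filter.1 z.2).2
      omega
    set E : {p // p ∈ Pj} → (Fin (n + j + m) → Fin q) :=
      fun z => fun i => Fin.append (Fin.append z.1.1 (Kw z.1)) z.1.2 (Fin.cast (hcast z) i)
      with hE
    have hadmE : ∀ z : {p // p ∈ Pj}, Admissible Sig (E z) := by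
      intro z
      rw [hE]
      rw [admissible_cast (hcast z)]
      exact (hKw z.1 (Finset.mem_filter.1 (Finset.mem_filter.1 z.2).1).2).1
    have hwE : ∀ z : {p // p ∈ Pj},
        wordNorm Sig A (E z) = wordNorm Sig A (Fin.append (Fin.append z.1.1 (Kw z.1)) z.1.2) := by
      intro z
      rw [hE, wordNorm_cast (hcast z)]
    -- evaluation lemmas for injectivity
    have key1 : ∀ (z : {p // p ∈ Pj}) (i : Fin n),
        E z (Fin.castAdd m (Fin.castAdd j i)) = z.1.1 i := by
      intro z i
      rw [hE]
      have hc : Fin.cast (hcast z) (Fin.castAdd m (Fin.castAdd j i))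
          = Fin.castAdd m (Fin.castAdd (L z.1) i) := Fin.ext (by simp)
      simp only [hc, Fin.append_left]
    have key2 : ∀ (z : {p // p ∈ Pj}) (i : Fin m),
        E z (Fin.natAdd (n + j) i) = z.1.2 i := by
      intro z i
      rw [hE]
      have hLz : L z.1 = j := (Finset.mem_filter.1 z.2).2
      have hc : Fin.cast (hcast z) (Fin.natAdd (n + j) i)
          = Fin.natAdd (n + L z.1) i := Fin.ext (by simp [hLz])
      simp only [hc, Fin.append_right]
    have hinj : ∀ x ∈ Pj.attach, ∀ y ∈ Pj.attach, E x = E y → x = y := by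
      intro x _ y _ hxy
      refine Subtype.ext (Prod.ext (funext fun i => ?_) (funext fun i => ?_))
      · rw [← key1 x i, ← key1 y i, hxy]
      · rw [← key2 x i, ← key2 y i, hxy]
    calc (∑ p ∈ Pj, wordNorm Sig A (Fin.append (Fin.append p.1 (Kw p)) p.2) ^ t)
        = ∑ z ∈ Pj.attach, wordNorm Sig A (Fin.append (Fin.append z.1.1 (Kw z.1)) z.1.2) ^ t :=
          (Finset.sum_attach _ _).symm
      _ = ∑ z ∈ Pj.attach,
            (if Admissible Sig (E z) then wordNorm Sig A (E z) ^ t else 0) := by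
          refine Finset.sum_congr rfl fun z _ => ?_
          rw [if_pos (hadmE z), hwE z]
      _ = ∑ W ∈ Pj.attach.image E,
            (if Admissible Sig W then wordNorm Sig A W ^ t else 0) :=
          (Finset.sum_image (f := fun W => if Admissible Sig W then wordNorm Sig A W ^ t else 0) hinj).symm
      _ ≤ pSum Sig A t (n + j + m) := by
          refine Finset.sum_le_sum_of_subset_of_nonneg (Finset.subset_univ _) ?_
          intro W _ _
          exact term_nonneg hSFT hA W
  -- assemble
  calc C ^ t * pSum Sig A t n * pSum Sig A t m
      = ∑ p ∈ P, (C * wordNorm Sig A p.1 * wordNorm Sig A p.2) ^ t := by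
        rw [expand, restrict]
        exact Finset.sum_congr rfl onP
    _ ≤ ∑ p ∈ P, wordNorm Sig A (Fin.append (Fin.append p.1 (Kw p)) p.2) ^ t := stepB
    _ = ∑ j ∈ Finset.range (m₀ + 1), ∑ p ∈ P.filter (fun p => L p = j),
          wordNorm Sig A (Fin.append (Fin.append p.1 (Kw p)) p.2) ^ t := stepC
    _ ≤ ∑ j ∈ Finset.range (m₀ + 1), pSum Sig A t (n + j + m) :=
        Finset.sum_le_sum stepD
    _ ≤ ∑ j ∈ Finset.range (m₀ + 1), pSum Sig A t (n + m) * pSum Sig A t j := by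
        refine Finset.sum_le_sum fun j _ => ?_
        rw [show n + j + m = (n + m) + j from by omega]
        exact pSum_submult hSFT hA ht (n + m) j
    _ = (∑ j ∈ Finset.range (m₀ + 1), pSum Sig A t j) * pSum Sig A t (n + m) := by
        rw [← Finset.mul_sum, mul_comm]

end Aux4

section Aux5
variable {q k : ℕ} {Q : Fin q → Fin q → Prop} {Sig : Set (ℤ → Fin q)}
  {A : (ℤ → Fin q) → (EuclideanSpace ℝ (Fin k) →L[ℝ] EuclideanSpace ℝ (Fin k))} {t : ℝ}

lemma pSum_zero (hne : Sig.Nonempty) :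
    pSum Sig A t 0
      = ‖(1 : EuclideanSpace ℝ (Fin k) →L[ℝ] EuclideanSpace ℝ (Fin k))‖ ^ t := by
  rw [pSum, Fintype.sum_unique]
  have hadm : Admissible Sig (default : Fin 0 → Fin q) := by
    obtain ⟨x, hx⟩ := hne
    exact ⟨x, hx, fun i => i.elim0⟩
  rw [if_pos hadm]
  congr 1
  rw [wordNorm]
  have hc : cylinder Sig (default : Fin 0 → Fin q) = Sig := by
    ext x
    exact ⟨fun h => h.1, fun h => ⟨h, fun i => i.elim0⟩⟩
  rw [hc]
  have h2 : (fun x : ℤ → Fin q => ‖shiftCocycle A 0 x‖)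
      = fun _ => ‖(1 : EuclideanSpace ℝ (Fin k) →L[ℝ] EuclideanSpace ℝ (Fin k))‖ := rfl
  rw [h2, Set.Nonempty.image_const hne, csSup_singleton]

end Aux5


/-- If the cocycle `A` over a subshift of finite type is quasi-multiplicative, then for
every `t > 0` the sequence `(1/n) log Σ_{I ∈ L(n)} ‖A(I)‖^t` converges. -/
theorem quasimultiplicative_partition_sum_converges
    {q k : ℕ} (Q : Fin q → Fin q → Prop)
    (Sig : Set (ℤ → Fin q))
    (hSFT : Sig = {x | ∀ i : ℤ, Q (x i) (x (i + 1))})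
    (hne : Sig.Nonempty)
    (A : (ℤ → Fin q) → (EuclideanSpace ℝ (Fin k) →L[ℝ] EuclideanSpace ℝ (Fin k)))
    (hA : Continuous A)
    (hqm : ∃ C : ℝ, 0 < C ∧ ∃ m₀ : ℕ,
      ∀ (n₁ n₂ : ℕ) (I : Fin n₁ → Fin q) (J : Fin n₂ → Fin q),
        Admissible Sig I → Admissible Sig J →
        ∃ l ≤ m₀, ∃ Kw : Fin l → Fin q,
          Admissible Sig (Fin.append (Fin.append I Kw) J) ∧
          C * wordNorm Sig A I * wordNorm Sig A J ≤
            wordNorm Sig A (Fin.append (Fin.append I Kw) J)) :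
    ∀ t : ℝ, 0 < t → ∃ c : ℝ,
      Tendsto (fun n : ℕ =>
          Real.log (∑ I : Fin n → Fin q,
            if Admissible Sig I then wordNorm Sig A I ^ t else 0) / n)
        atTop (nhds c) := by
  intro t ht
  obtain ⟨C, hC, m₀, hqm'⟩ := hqm
  have hfun : (fun n : ℕ =>
        Real.log (∑ I : Fin n → Fin q,
          if Admissible Sig I then wordNorm Sig A I ^ t else 0) / (n : ℝ))
      = fun n : ℕ => Real.log (pSum Sig A t n) / (n : ℝ) := rfl
  rw [hfun]
  by_cases hpos : ∀ n : ℕ, 0 < pSum Sig A t n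
  · -- positive case : Fekete
    set u : ℕ → ℝ := fun n => Real.log (pSum Sig A t n) with hu
    set B : ℝ := ∑ j ∈ Finset.range (m₀ + 1), pSum Sig A t j with hB
    have hBpos : 0 < B :=
      lt_of_lt_of_le (hpos 0)
        (Finset.single_le_sum (f := fun j => pSum Sig A t j)
          (fun j _ => pSum_nonneg hSFT hA j) (Finset.mem_range.2 (Nat.succ_pos m₀)))
    set K : ℝ := Real.log B - t * Real.log C with hK
    have hCt : (0:ℝ) < C ^ t := Real.rpow_pos_of_pos hC t
    have hsuper : ∀ n m : ℕ, u n + u m ≤ u (n + m) + K := by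
      intro n m
      have h := pSum_supermult hSFT hA hC hqm' ht.le n m
      have hCn := hpos n
      have hCm := hpos m
      have hCnm := hpos (n + m)
      have h1 : Real.log (C ^ t * pSum Sig A t n * pSum Sig A t m)
          ≤ Real.log (B * pSum Sig A t (n + m)) :=
        Real.log_le_log (by positivity) h
      rw [Real.log_mul (by positivity) hCm.ne', Real.log_mul hCt.ne' hCn.ne',
        Real.log_mul hBpos.ne' hCnm.ne', Real.log_rpow hC] at h1
      show Real.log (pSum Sig A t n) + Real.log (pSum Sig A t m)
        ≤ Real.log (pSum Sig A t (n + m)) + K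
      rw [hK]
      linarith
    have hsub : Subadditive u := by
      intro n m
      show Real.log (pSum Sig A t (n + m))
        ≤ Real.log (pSum Sig A t n) + Real.log (pSum Sig A t m)
      rw [← Real.log_mul (hpos n).ne' (hpos m).ne']
      exact Real.log_le_log (hpos (n + m)) (pSum_submult hSFT hA ht.le n m)
    have hu0 : u 0 = 0 := by
      show Real.log (pSum Sig A t 0) = 0
      rcases Nat.eq_zero_or_pos k with hk | hk
      · exfalso
        have h0 := hpos 0
        haveI : Subsingleton (EuclideanSpace ℝ (Fin k)) := by
          subst hk
          infer_instance
        have h1 : (1 : EuclideanSpace ℝ (Fin k) →L[ℝ] EuclideanSpace ℝ (Fin k)) = 0 :=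
          Subsingleton.elim _ _
        rw [pSum_zero hne, h1, norm_zero, Real.zero_rpow ht.ne'] at h0
        exact lt_irrefl _ h0
      · haveI : Nonempty (Fin k) := ⟨⟨0, hk⟩⟩
        haveI : Nontrivial (EuclideanSpace ℝ (Fin k)) :=
          by infer_instance
        rw [pSum_zero hne,
          show (1 : EuclideanSpace ℝ (Fin k) →L[ℝ] EuclideanSpace ℝ (Fin k))
            = ContinuousLinearMap.id ℝ _ from rfl,
          ContinuousLinearMap.norm_id, Real.one_rpow, Real.log_one]
    have hlow : ∀ n : ℕ, (n : ℝ) * (u 1 - K) ≤ u n := by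
      intro n
      induction n with
      | zero => simp [hu0]
      | succ n ih =>
        have h := hsuper 1 n
        rw [show 1 + n = n + 1 from by omega] at h
        push_cast
        nlinarith [h, ih]
    have hbdd : BddBelow (Set.range fun n : ℕ => u n / n) := by
      refine ⟨min 0 (u 1 - K), ?_⟩
      rintro x ⟨n, rfl⟩
      rcases Nat.eq_zero_or_pos n with h | h
      · subst h
        simp only [Nat.cast_zero, div_zero]
        exact min_le_left _ _
      · have hn : (0:ℝ) < n := by exact_mod_cast h
        have hthis : u 1 - K ≤ u n / n := by
          rw [le_div_iff₀ hn]
          calc (u 1 - K) * n = n * (u 1 - K) := mul_comm _ _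
            _ ≤ u n := hlow n
        exact (min_le_right _ _).trans hthis
    exact ⟨hsub.lim, hsub.tendsto_lim hbdd⟩
  · -- degenerate case : the sums vanish eventually
    push_neg at hpos
    obtain ⟨n₀, hn₀⟩ := hpos
    have hz : pSum Sig A t n₀ = 0 := le_antisymm hn₀ (pSum_nonneg hSFT hA n₀)
    refine ⟨0, ?_⟩
    have hev : ∀ n, n₀ ≤ n → pSum Sig A t n = 0 := by
      intro n hn
      have h1 : pSum Sig A t n ≤ pSum Sig A t n₀ * pSum Sig A t (n - n₀) := by
        have h := pSum_submult hSFT hA ht.le n₀ (n - n₀)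
        rwa [show n₀ + (n - n₀) = n from by omega] at h
      have h2 := pSum_nonneg (t := t) hSFT hA n
      rw [hz, zero_mul] at h1
      linarith
    refine Tendsto.congr' ?_ tendsto_const_nhds
    filter_upwards [eventually_ge_atTop n₀] with n hn
    rw [hev n hn, Real.log_zero, zero_div]
end

section
/- Let Φ = {log φ_n} be a subadditive potential on a compact system (X,T) with h_top(T) < ∞, and suppose the entropy map μ ↦ h_μ(T) is upper semicontinuous. Let (t_i) be a sequence with t_i → ∞ and let μ_{t_i} be an equilibrium state for t_iΦ, i.e., h_{μ_{t_i}}(T) + t_i·χ(μ_{t_i},Φ) = P_Φ(t_i). Then any weak-* accumulation point μ of (μ_{t_i}) satisfies χ(μ,Φ) = β(Φ) := sup{χ(ν,Φ) : ν ∈ M(X,T)}, i.e., μ is a Lyapunov maximizing measure for Φ. -/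
open MeasureTheory Filter

/-- Zero temperature limits: accumulation points of equilibrium states for `t_iΦ` with
`t_i → ∞` are Lyapunov maximizing measures for the subadditive potential `Φ`. -/
theorem zero_temperature_limit_maximizing
    {X : Type*} [MetricSpace X] [CompactSpace X] [MeasurableSpace X] [BorelSpace X]
    (T : X → X) (hT : Continuous T)
    (φ : ℕ → X → ℝ)
    (hcont : ∀ n, Continuous (φ n))
    (hpos : ∀ n x, 0 < φ n x)
    (hsub : ∀ m n : ℕ, 1 ≤ m → 1 ≤ n → ∀ x, φ (n + m) x ≤ φ n x * φ m (T^[n] x))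
    (Inv : Set (ProbabilityMeasure X))
    (hInv : Inv = {μ : ProbabilityMeasure X | (μ : Measure X).map T = (μ : Measure X)})
    -- the Lyapunov exponent functional `χ(·,Φ)`
    (χ : ProbabilityMeasure X → ℝ)
    (hχ : ∀ μ ∈ Inv,
      Tendsto (fun n : ℕ => (∫ x, Real.log (φ n x) ∂(μ : Measure X)) / n)
        atTop (nhds (χ μ)))
    -- the entropy map, upper semicontinuous and bounded (finite topological entropy)
    (h : ProbabilityMeasure X → ℝ)
    (husc : UpperSemicontinuousOn h Inv)
    (hbdd : ∃ B : ℝ, ∀ μ ∈ Inv, h μ ≤ B)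
    -- the subadditive pressure, given by the Cao–Feng–Huang variational principle
    (P : ℝ → ℝ)
    (hvar : ∀ t : ℝ, IsLUB {y : ℝ | ∃ μ ∈ Inv, y = h μ + t * χ μ} (P t))
    -- equilibrium states for `t_iΦ` with `t_i → ∞`
    (ts : ℕ → ℝ) (hts : Tendsto ts atTop atTop)
    (μs : ℕ → ProbabilityMeasure X) (hμs : ∀ i, μs i ∈ Inv)
    (heq : ∀ i, h (μs i) + ts i * χ (μs i) = P (ts i))
    (μ : ProbabilityMeasure X) (hcl : MapClusterPt μ atTop μs) :
    μ ∈ Inv ∧ ∀ ν ∈ Inv, χ ν ≤ χ μ := by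
  classical
  -- the log-potentials as bounded continuous functions
  have hlogcont : ∀ n, Continuous fun x => Real.log (φ n x) := fun n =>
    (hcont n).log (fun x => (hpos n x).ne')
  set g : ℕ → (BoundedContinuousFunction X ℝ) := fun n =>
    BoundedContinuousFunction.mkOfCompact ⟨fun x => Real.log (φ n x), hlogcont n⟩ with hg
  set a : ℕ → ProbabilityMeasure X → ℝ :=
    fun n ρ => ∫ x, Real.log (φ n x) ∂(ρ : Measure X) with ha
  have hacont : ∀ n, Continuous fun ρ : ProbabilityMeasure X => a n ρ := by
    intro n
    have := ProbabilityMeasure.continuous_integral_boundedContinuousFunction (X := X) (g n)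
    convert this using 2
    rfl
  -- invariance under iterates
  have hmapiter : ∀ ρ ∈ Inv, ∀ n : ℕ, (ρ : Measure X).map (T^[n]) = (ρ : Measure X) := by
    intro ρ hρ n
    induction n with
    | zero => simp [Measure.map_id]
    | succ n ih =>
        rw [Function.iterate_succ']
        rw [← Measure.map_map hT.measurable (hT.measurable.iterate n), ih]
        rw [hInv] at hρ
        exact hρ
  have hint : ∀ (ρ : ProbabilityMeasure X) (n : ℕ),
      Integrable (fun x => Real.log (φ n x)) (ρ : Measure X) := by
    intro ρ n
    exact (g n).integrable _
  -- change of variables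
  have hcomp : ∀ ρ ∈ Inv, ∀ m n : ℕ,
      ∫ x, Real.log (φ m (T^[n] x)) ∂(ρ : Measure X) = a m ρ := by
    intro ρ hρ m n
    have := MeasureTheory.integral_map (μ := (ρ : Measure X))
      (φ := T^[n]) (f := fun x => Real.log (φ m x))
      ((hT.measurable.iterate n).aemeasurable)
      ((hlogcont m).aestronglyMeasurable.mono_ac (by rw [hmapiter ρ hρ n]))
    rw [hmapiter ρ hρ n] at this
    exact this.symm
  -- subadditivity of the integral sequence on invariant measures
  have hsuba : ∀ ρ ∈ Inv, ∀ m n : ℕ, 1 ≤ m → 1 ≤ n → a (n + m) ρ ≤ a n ρ + a m ρ := by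
    intro ρ hρ m n hm hn
    have hle : ∀ x, Real.log (φ (n + m) x) ≤
        Real.log (φ n x) + Real.log (φ m (T^[n] x)) := by
      intro x
      have := Real.log_le_log (hpos (n + m) x) (hsub m n hm hn x)
      rwa [Real.log_mul (hpos n x).ne' (hpos m _).ne'] at this
    have hint2 : Integrable (fun x => Real.log (φ m (T^[n] x))) (ρ : Measure X) :=
      (BoundedContinuousFunction.mkOfCompact
        ⟨fun x => Real.log (φ m (T^[n] x)),
          (hlogcont m).comp (hT.iterate n)⟩).integrable _
    calc a (n + m) ρ
        ≤ ∫ x, (Real.log (φ n x) + Real.log (φ m (T^[n] x))) ∂(ρ : Measure X) :=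
          integral_mono (hint ρ (n + m)) ((hint ρ n).add hint2) hle
      _ = a n ρ + ∫ x, Real.log (φ m (T^[n] x)) ∂(ρ : Measure X) :=
          integral_add (hint ρ n) hint2
      _ = a n ρ + a m ρ := by rw [hcomp ρ hρ m n]
  -- key estimate: χ ρ ≤ a n ρ / n for all invariant ρ and n ≥ 1
  have hkey : ∀ ρ ∈ Inv, ∀ n : ℕ, 1 ≤ n → χ ρ ≤ a n ρ / n := by
    intro ρ hρ n hn
    have hmul : ∀ k : ℕ, 1 ≤ k → a (k * n) ρ ≤ k * a n ρ := by
      intro k hk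
      induction k with
      | zero => omega
      | succ k ih =>
          rcases Nat.eq_or_lt_of_le hk with hk1 | hk2
          · simp [← hk1]
          · have hk' : 1 ≤ k := by omega
            have h1 : a ((k + 1) * n) ρ ≤ a (k * n) ρ + a n ρ := by
              have := hsuba ρ hρ n (k * n) hn (le_trans hk' (Nat.le_mul_of_pos_right k (by omega)))
              calc a ((k + 1) * n) ρ = a (k * n + n) ρ := by ring_nf
                _ ≤ a (k * n) ρ + a n ρ := this
            calc a ((k + 1) * n) ρ ≤ a (k * n) ρ + a n ρ := h1
              _ ≤ k * a n ρ + a n ρ := by linarith [ih hk']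
              _ = (k + 1 : ℕ) * a n ρ := by push_cast; ring
    have hlim : Tendsto (fun k : ℕ => a (k * n) ρ / ((k * n : ℕ) : ℝ))
        atTop (nhds (χ ρ)) := by
      have h1 : Tendsto (fun k : ℕ => k * n) atTop atTop :=
        tendsto_atTop_mono (fun k => Nat.le_mul_of_pos_right k (by omega)) tendsto_id
      exact (hχ ρ hρ).comp h1
    refine le_of_tendsto hlim ?_
    filter_upwards [eventually_ge_atTop 1] with k hk
    have hkn : (0 : ℝ) < (k : ℝ) * n := by
      have : (1 : ℝ) ≤ (k : ℝ) := by exact_mod_cast hk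
      have : (1 : ℝ) ≤ (n : ℝ) := by exact_mod_cast hn
      positivity
    have := hmul k hk
    rw [Nat.cast_mul, div_le_div_iff₀ (by push_cast at hkn ⊢; linarith)
      (by exact_mod_cast Nat.lt_of_lt_of_le Nat.zero_lt_one hn)]
    calc a (k * n) ρ * n ≤ (k * a n ρ) * n := by
          have hn0 : (0 : ℝ) ≤ (n : ℝ) := Nat.cast_nonneg n
          exact mul_le_mul_of_nonneg_right this hn0
      _ = a n ρ * ((k : ℝ) * n) := by ring
  -- μ is invariant: Inv is closed and μ is a cluster point of a sequence in Inv
  have hμInv : μ ∈ Inv := by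
    have hFcont : Continuous fun ρ : ProbabilityMeasure X =>
        ρ.map hT.measurable.aemeasurable := ProbabilityMeasure.continuous_map hT
    have hclosed : IsClosed Inv := by
      have : Inv = {ρ : ProbabilityMeasure X | ρ.map hT.measurable.aemeasurable = ρ} := by
        rw [hInv]
        ext ρ
        simp only [Set.mem_setOf_eq]
        constructor
        · intro hh
          apply ProbabilityMeasure.toMeasure_injective
          rw [ProbabilityMeasure.toMeasure_map]
          exact hh
        · intro hh
          conv_rhs => rw [← hh]
          rw [ProbabilityMeasure.toMeasure_map]
      rw [this]
      exact isClosed_eq hFcont continuous_id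
    have h1 : Filter.map μs atTop ≤ Filter.principal Inv := by
      rw [le_principal_iff]
      exact Filter.mem_map.mpr (Filter.Eventually.of_forall hμs)
    have h2 : ClusterPt μ (Filter.principal Inv) := hcl.clusterPt.mono h1
    exact hclosed.closure_subset (mem_closure_iff_clusterPt.mpr h2)
  refine ⟨hμInv, ?_⟩
  -- maximization
  intro ν hν
  obtain ⟨B, hB⟩ := hbdd
  refine le_of_forall_pos_le_add ?_
  intro ε hε
  -- choose n with a n μ / n < χ μ + ε/3
  have hev : ∀ᶠ n : ℕ in atTop, a n μ / n < χ μ + ε / 3 :=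
    (hχ μ hμInv).eventually_lt_const (by linarith)
  obtain ⟨n, hn1, hn2⟩ := ((eventually_ge_atTop 1).and hev).exists
  -- the open neighborhood of μ
  have hU : {ρ : ProbabilityMeasure X | a n ρ / n < χ μ + ε / 3} ∈ nhds μ := by
    have : IsOpen {ρ : ProbabilityMeasure X | a n ρ / n < χ μ + ε / 3} :=
      isOpen_lt ((hacont n).div_const _) continuous_const
    exact this.mem_nhds hn2
  -- frequently the μs i are in U, eventually ts i is large
  have hfreq : ∃ᶠ i in atTop, a n (μs i) / n < χ μ + ε / 3 :=
    mapClusterPt_iff_frequently.mp hcl _ hU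
  have hevts : ∀ᶠ i in atTop, max 1 ((B - h ν) / (ε / 3)) ≤ ts i :=
    hts.eventually_ge_atTop _
  obtain ⟨i, hi1, hi2⟩ := (hfreq.and_eventually hevts).exists
  -- estimates at index i
  have hts1 : (1 : ℝ) ≤ ts i := le_trans (le_max_left _ _) hi2
  have hts0 : (0 : ℝ) < ts i := lt_of_lt_of_le zero_lt_one hts1
  have hts2 : B - h ν ≤ ts i * (ε / 3) := by
    have := le_trans (le_max_right _ _) hi2
    calc B - h ν ≤ ((B - h ν) / (ε / 3)) * (ε / 3) := by
          rw [div_mul_cancel₀]; positivity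
      _ ≤ ts i * (ε / 3) := by
          apply mul_le_mul_of_nonneg_right this; positivity
  have hP1 : h ν + ts i * χ ν ≤ P (ts i) := (hvar (ts i)).1 ⟨ν, hν, rfl⟩
  have hP2 : P (ts i) ≤ B + ts i * χ (μs i) := by
    rw [← heq i]; linarith [hB (μs i) (hμs i)]
  have hχi : χ (μs i) < χ μ + ε / 3 :=
    lt_of_le_of_lt (hkey (μs i) (hμs i) n hn1) hi1
  -- combine: ts i * (χ ν - χ (μs i)) ≤ B - h ν ≤ ts i * ε/3
  have hdiff : ts i * χ ν - ts i * χ (μs i) ≤ ts i * (ε / 3) := by linarith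
  have hfin : χ ν - χ (μs i) ≤ ε / 3 := by
    by_contra hc
    push_neg at hc
    nlinarith
  linarith
end
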